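/- arXiv:1512.07126 — 7 statements merged into one kernel-verified Lean document; each statement's English description precedes it below -/
import Mathlib

section
/- Let A ∈ ℝ^{m×n} be a generic matrix (every subset of at most n of its rows is linearly independent) and let C = {x ∈ ℝ^n : Ax ≤ 0}. If there exists a non-zero vector v ∈ C, then the interior of C is non-empty. -/
open Pointwise

noncomputable section

/-- The set of lattice (integer) points in `ℝ^n`. -/
def lat (n : ℕ) : Set (Fin n → ℝ) := {x | ∀ j, ∃ z : ℤ, x j = (z : ℝ)}

/-- The polyhedron determined by the subsystem of `A x ≤ b` indexed by `I`. -/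
def polyI {n m : ℕ} (A : Fin m → Fin n → ℝ) (b : Fin m → ℝ) (I : Set (Fin m)) :
    Set (Fin n → ℝ) := {x | ∀ i ∈ I, ∑ j, A i j * x j ≤ b i}

/-- The integer points of a set `S ⊆ ℝ^n`. -/
def intPts {n : ℕ} (S : Set (Fin n → ℝ)) : Set (Fin n → ℝ) := S ∩ lat n

/-- `c` is a valid Helly-type bound for dimension `n` and `k` integer points:
any polyhedron with exactly `k` integer points has a subsystem of at most `c`
inequalities with exactly the same integer points. -/
def HellyBound (n k c : ℕ) : Prop :=
  ∀ (m : ℕ) (A : Fin m → Fin n → ℝ) (b : Fin m → ℝ),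
    (intPts (polyI A b Set.univ)).Finite →
    (intPts (polyI A b Set.univ)).ncard = k →
    ∃ I : Finset (Fin m), I.card ≤ c ∧
      intPts (polyI A b (↑I : Set (Fin m))) = intPts (polyI A b Set.univ)

/-- The quantity `c(n,k)`: the least valid Helly-type bound. -/
def cnk (n k : ℕ) : ℕ := sInf {c | HellyBound n k c}

/-- A set of points is in convex position if no point of it lies in the convex
hull of the others. -/
def ConvexPos {n : ℕ} (V : Set (Fin n → ℝ)) : Prop :=
  ∀ v ∈ V, v ∉ convexHull ℝ (V \ {v})

/-- `iconv V = conv(V) ∩ ℤ^n`. -/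
def iconv {n : ℕ} (V : Set (Fin n → ℝ)) : Set (Fin n → ℝ) :=
  convexHull ℝ V ∩ lat n

/-- `ℓ(n,k)`: the smallest integer `s` such that every set `V ⊆ ℤ^n` in convex
position with `|V| = s` satisfies `|iconv(V) \ V| ≥ k`. -/
def ellnk (n k : ℕ) : ℕ :=
  sInf {s | ∀ V : Set (Fin n → ℝ), V ⊆ lat n → ConvexPos V → V.Finite →
    V.ncard = s → k ≤ (iconv V \ V).ncard}

/-- The set of midpoints of `V` that are not in `V`. -/
def midpts {n : ℕ} (V : Set (Fin n → ℝ)) : Set (Fin n → ℝ) :=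
  {p | ∃ x ∈ V, ∃ y ∈ V, p = (1/2 : ℝ) • (x + y)} \ V

/-- `μ_c(n,s)`: the minimum number of midpoints `|M(V)|` over all sets
`V ⊆ ℝ^n` in convex position with `|V| = s`. -/
def muc (n s : ℕ) : ℕ :=
  sInf {m | ∃ V : Set (Fin n → ℝ), ConvexPos V ∧ V.Finite ∧ V.ncard = s ∧
    (midpts V).ncard = m}

/-- `α(n,k)`: the maximum cardinality of a set `V ⊆ ℤ^n` in convex position
with `|iconv(V) \ V| = k`. -/
def alphank (n k : ℕ) : ℕ :=
  sSup {m | ∃ V : Set (Fin n → ℝ), V ⊆ lat n ∧ ConvexPos V ∧ V.Finite ∧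
    V.ncard = m ∧ (iconv V \ V).ncard = k}

/-- A system `A x ≤ b` is non-redundant if removing any single inequality
strictly increases the set of integer points. -/
def NonRedundant {n m : ℕ} (A : Fin m → Fin n → ℝ) (b : Fin m → ℝ) : Prop :=
  ∀ i : Fin m,
    intPts (polyI A b Set.univ) ⊂ intPts (polyI A b ({i}ᶜ : Set (Fin m)))

/-- The set of lattice (integer) points in Euclidean space `ℝ^n`. -/
def latE (n : ℕ) : Set (EuclideanSpace ℝ (Fin n)) := {x | ∀ j, ∃ z : ℤ, x j = (z : ℝ)}

open Filter

private lemma aux_surj {n : ℕ} {ι : Type} [Fintype ι] (M : Matrix ι (Fin n) ℝ)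
    (li : LinearIndependent ℝ (fun i : ι => M i)) (y : ι → ℝ) :
    ∃ w : Fin n → ℝ, M.mulVec w = y := by
  have hr : M.rank = Fintype.card ι := li.rank_matrix
  have htop : LinearMap.range M.mulVecLin = ⊤ := by
    apply Submodule.eq_top_of_finrank_eq
    rw [← Matrix.rank, hr, Module.finrank_fintype_fun_eq_card]
  exact LinearMap.range_eq_top.mp htop y

private lemma aux_inj {n : ℕ} {ι : Type} [Fintype ι] (M : Matrix ι (Fin n) ℝ)
    (li : LinearIndependent ℝ (fun i : ι => M i)) (hc : Fintype.card ι = n)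
    (v : Fin n → ℝ) (hMv : M.mulVec v = 0) : v = 0 := by
  have hr : M.rank = Fintype.card ι := li.rank_matrix
  have hrn := LinearMap.finrank_range_add_finrank_ker M.mulVecLin
  rw [← Matrix.rank, hr, hc, Module.finrank_fintype_fun_eq_card, Fintype.card_fin] at hrn
  have hker : LinearMap.ker M.mulVecLin = ⊥ := by
    apply Submodule.finrank_eq_zero.mp; omega
  have : v ∈ LinearMap.ker M.mulVecLin := by simpa [Matrix.mulVecLin] using hMv
  rw [hker] at this
  simpa using this


/-- If `A` is generic (every subset of at most `n` rows is
linearly independent) and the cone `C = {x : A x ≤ 0}` contains a non-zero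
vector, then `C` has non-empty interior. -/
theorem stmt0 {m n : ℕ} (A : Fin m → Fin n → ℝ)
    (hgen : ∀ S : Finset (Fin m), S.card ≤ n →
      LinearIndependent ℝ (fun i : {i // i ∈ S} => A i.1))
    (v : Fin n → ℝ) (hv : v ≠ 0)
    (hvC : v ∈ {x : Fin n → ℝ | ∀ i, ∑ j, A i j * x j ≤ 0}) :
    (interior {x : Fin n → ℝ | ∀ i, ∑ j, A i j * x j ≤ 0}).Nonempty := by
  classical
  set T : Finset (Fin m) := Finset.univ.filter (fun i => ∑ j, A i j * v j = 0) with hT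
  -- T has at most n elements
  have hTcard : T.card ≤ n := by
    by_contra h
    push_neg at h
    obtain ⟨S, hST, hScard⟩ := Finset.exists_subset_card_eq (le_of_lt h)
    have li := hgen S hScard.le
    apply hv
    apply aux_inj (fun i : {i // i ∈ S} => A i.1) li (by simp [hScard])
    funext i
    have hiT : i.1 ∈ T := hST i.2
    rw [hT, Finset.mem_filter] at hiT
    simpa [Matrix.mulVec, dotProduct] using hiT.2
  -- find w with A i · w = -1 for i ∈ T
  obtain ⟨w, hw⟩ := aux_surj (fun i : {i // i ∈ T} => A i.1) (hgen T hTcard)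
    (fun _ => (-1 : ℝ))
  have hwT : ∀ i ∈ T, ∑ j, A i j * w j = -1 := by
    intro i hi
    have := congr_fun hw ⟨i, hi⟩
    simpa [Matrix.mulVec, dotProduct] using this
  -- strict inequalities eventually for large c
  have key : ∀ i : Fin m, ∀ᶠ c : ℝ in atTop, ∑ j, A i j * (c • v + w) j < 0 := by
    intro i
    have hexp : ∀ c : ℝ, ∑ j, A i j * (c • v + w) j
        = c * (∑ j, A i j * v j) + ∑ j, A i j * w j := by
      intro c
      rw [Finset.mul_sum, ← Finset.sum_add_distrib]
      congr 1; funext j; simp; ring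
    by_cases hi : i ∈ T
    · apply Eventually.of_forall
      intro c
      have hi0 : ∑ j, A i j * v j = 0 := by
        rw [hT, Finset.mem_filter] at hi; exact hi.2
      rw [hexp, hi0, hwT i hi]
      norm_num
    · have hneg : ∑ j, A i j * v j < 0 := by
        have h1 := hvC i
        have h2 : ∑ j, A i j * v j ≠ 0 := by
          rw [hT] at hi; simpa using hi
        exact lt_of_le_of_ne h1 h2
      have htend : Tendsto (fun c : ℝ => c * (∑ j, A i j * v j) + ∑ j, A i j * w j)
          atTop atBot := by
        apply tendsto_atBot_add_const_right
        exact tendsto_id.atTop_mul_const_of_neg hneg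
      have := htend.eventually (eventually_lt_atBot 0)
      filter_upwards [this] with c hc
      rw [hexp]; exact hc
  obtain ⟨c, hc⟩ := (eventually_all.mpr key).exists
  refine ⟨c • v + w, ?_⟩
  have hopen : IsOpen {x : Fin n → ℝ | ∀ i, ∑ j, A i j * x j < 0} := by
    have : {x : Fin n → ℝ | ∀ i, ∑ j, A i j * x j < 0}
        = ⋂ i, {x | ∑ j, A i j * x j < 0} := by ext x; simp
    rw [this]
    apply isOpen_iInter_of_finite
    intro i
    have hcont : Continuous fun x : Fin n → ℝ => ∑ j, A i j * x j := by
      apply continuous_finset_sum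
      intro j _
      exact continuous_const.mul (continuous_apply j)
    exact isOpen_lt hcont continuous_const
  apply interior_maximal _ hopen hc
  intro x hx i
  exact (hx i).le
end
end

section
/- For every n ≥ 1 there exists a subset U ⊆ ℝ^n that is dense in ℝ^n and such that every finite subset {u_1, …, u_k} ⊆ U is linearly independent over ℚ; that is, there do not exist rational vectors q_1, …, q_k ∈ ℚ^n, not all zero, with q_1·u_1 + ⋯ + q_k·u_k = 0. -/
open Pointwise

noncomputable section

lemma exists_good' (a b : ℝ) (hab : a < b) (s : Set ℝ) (hs : s.Countable) :
    ∃ x, x ∈ Set.Ioo a b ∧ x ∉ s := by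
  by_contra h
  push_neg at h
  have hc : (Set.Ioo a b).Countable := hs.mono h
  rw [← Cardinal.le_aleph0_iff_set_countable, Cardinal.mk_Ioo_real hab] at hc
  exact absurd hc Cardinal.aleph0_lt_continuum.not_ge

lemma span_range_countable {r : ℕ} (v : Fin r → ℝ) :
    (Submodule.span ℚ (Set.range v) : Set ℝ).Countable :=
  Set.countable_coe_iff.mp (inferInstance : Countable (Submodule.span ℚ (Set.range v)))

noncomputable def ctr' (n : ℕ) (hn : 0 < n) (d : ℕ → Fin n → ℝ) (r : ℕ) : ℝ :=
  d (Nat.unpair (r / n)).1 ⟨r % n, Nat.mod_lt r hn⟩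

noncomputable def rad' (n : ℕ) (r : ℕ) : ℝ := 1 / ((Nat.unpair (r / n)).2 + 1)

lemma rad'_pos (n r : ℕ) : 0 < rad' n r := by unfold rad'; positivity

lemma ctr'_lt (n : ℕ) (hn : 0 < n) (d : ℕ → Fin n → ℝ) (r : ℕ) :
    ctr' n hn d r - rad' n r < ctr' n hn d r + rad' n r := by
  have := rad'_pos n r; linarith

noncomputable def gfun (n : ℕ) (hn : 0 < n) (d : ℕ → Fin n → ℝ) : ℕ → ℝ
  | r => (exists_good' (ctr' n hn d r - rad' n r) (ctr' n hn d r + rad' n r)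
      (ctr'_lt n hn d r)
      (Submodule.span ℚ (Set.range fun r' : Fin r => gfun n hn d r'))
      (span_range_countable _)).choose
decreasing_by all_goals exact r'.isLt

lemma gfun_spec (n : ℕ) (hn : 0 < n) (d : ℕ → Fin n → ℝ) (r : ℕ) :
    gfun n hn d r ∈ Set.Ioo (ctr' n hn d r - rad' n r) (ctr' n hn d r + rad' n r) ∧
      gfun n hn d r ∉ Submodule.span ℚ (Set.range fun r' : Fin r => gfun n hn d r') := by
  have e : gfun n hn d r = (exists_good' (ctr' n hn d r - rad' n r) (ctr' n hn d r + rad' n r)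
      (ctr'_lt n hn d r)
      (Submodule.span ℚ (Set.range fun r' : Fin r => gfun n hn d r'))
      (span_range_countable _)).choose := by
    conv_lhs => rw [gfun]
  rw [e]
  exact (exists_good' _ _ (ctr'_lt n hn d r) _ (span_range_countable _)).choose_spec

lemma li_of_spec (g : ℕ → ℝ)
    (hg : ∀ r, g r ∉ Submodule.span ℚ (Set.range fun r' : Fin r => g r')) :
    LinearIndependent ℚ g := by
  rw [linearIndependent_iff']
  intro s
  induction s using Finset.strongInduction with
  | _ s ih =>
    intro f hsum i hi
    obtain ⟨N, hNs, hmax⟩ := s.exists_max_image id ⟨i, hi⟩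
    simp only [id] at hmax
    have h1 : f N • g N + ∑ j ∈ s.erase N, f j • g j = 0 := by
      rw [Finset.add_sum_erase _ (fun j => f j • g j) hNs]; exact hsum
    have hfN : f N = 0 := by
      by_contra hfN
      apply hg N
      have hgN : g N = (f N)⁻¹ • (f N • g N) := by
        rw [smul_smul, inv_mul_cancel₀ hfN, one_smul]
      have h2 : f N • g N = -∑ j ∈ s.erase N, f j • g j :=
        eq_neg_of_add_eq_zero_left h1
      rw [hgN, h2, smul_neg]
      apply Submodule.neg_mem
      rw [Finset.smul_sum]
      apply Submodule.sum_mem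
      intro j hj
      rw [smul_smul]
      apply Submodule.smul_mem
      apply Submodule.subset_span
      obtain ⟨hjne, hjs⟩ := Finset.mem_erase.mp hj
      exact ⟨⟨j, lt_of_le_of_ne (hmax j hjs) hjne⟩, rfl⟩
    have hsum' : ∑ j ∈ s.erase N, f j • g j = 0 := by
      rw [hfN, zero_smul, zero_add] at h1; exact h1
    rcases eq_or_ne i N with rfl | hne
    · exact hfN
    · exact ih (s.erase N) (Finset.erase_ssubset hNs) f hsum' i
        (Finset.mem_erase.mpr ⟨hne, hi⟩)


/-- There is a dense subset `U ⊆ ℝ^n` such that every finite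
collection of distinct elements of `U` is linearly independent over `ℚ`, in
the sense that the only rational vectors `q_1, …, q_k` with
`q_1·u_1 + ⋯ + q_k·u_k = 0` are all zero. -/
theorem stmt1 (n : ℕ) (hn : 1 ≤ n) :
    ∃ U : Set (Fin n → ℝ), Dense U ∧
      ∀ (k : ℕ) (u : Fin k → Fin n → ℝ), Function.Injective u →
        (∀ i, u i ∈ U) →
        ∀ q : Fin k → Fin n → ℚ,
          (∑ i, ∑ j, (q i j : ℝ) * u i j) = 0 → ∀ i, q i = 0 := by
  have hn0 : 0 < n := hn
  let d : ℕ → Fin n → ℝ := TopologicalSpace.denseSeq (Fin n → ℝ)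
  have hd : DenseRange d := TopologicalSpace.denseRange_denseSeq _
  set g := gfun n hn0 d with hgdef
  have hgli : LinearIndependent ℚ g := li_of_spec g (fun r => (gfun_spec n hn0 d r).2)
  let u : ℕ → Fin n → ℝ := fun m j => g (n * m + j)
  have keybound : ∀ (i t : ℕ) (j : Fin n),
      dist (u (Nat.pair i t) j) (d i j) ≤ 1 / (t + 1) := by
    intro i t j
    set m := Nat.pair i t with hm
    set r := n * m + (j : ℕ) with hr
    have e1 : r / n = m := by
      rw [hr, Nat.mul_add_div hn0, Nat.div_eq_of_lt j.isLt, Nat.add_zero]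
    have e2 : r % n = j := by
      rw [hr, Nat.mul_add_mod, Nat.mod_eq_of_lt j.isLt]
    have hc : ctr' n hn0 d r = d i j := by
      unfold ctr'
      congr 1
      · rw [e1, hm, Nat.unpair_pair]
      · exact Fin.ext e2
    have hrho : rad' n r = 1 / (t + 1) := by
      unfold rad'
      rw [e1, hm, Nat.unpair_pair]
    have hspec := (gfun_spec n hn0 d r).1
    rw [hc, hrho] at hspec
    have h1 := hspec.1
    have h2 := hspec.2
    have : u m j = g r := rfl
    rw [this, Real.dist_eq, abs_sub_le_iff]
    constructor <;> linarith
  refine ⟨Set.range u, ?_, ?_⟩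
  · rw [Metric.dense_iff]
    intro x ε hε
    obtain ⟨i, hi⟩ := Metric.denseRange_iff.mp hd x (ε / 2) (by linarith)
    obtain ⟨t, ht⟩ := exists_nat_one_div_lt (show (0 : ℝ) < ε / 2 by linarith)
    refine ⟨u (Nat.pair i t), ?_, ⟨Nat.pair i t, rfl⟩⟩
    rw [Metric.mem_ball]
    have hud : dist (u (Nat.pair i t)) (d i) ≤ 1 / (t + 1) :=
      dist_pi_le_iff (by positivity) |>.mpr (fun j => keybound i t j)
    calc dist (u (Nat.pair i t)) x ≤ dist (u (Nat.pair i t)) (d i) + dist (d i) x :=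
          dist_triangle _ _ _
      _ < ε := by
          have : dist (d i) x = dist x (d i) := dist_comm _ _
          linarith
  · intro k u' hinj hmem q hq
    choose mm hmm using hmem
    have hmminj : Function.Injective mm := by
      intro a b hab
      exact hinj (by rw [← hmm a, ← hmm b, hab])
    set e : Fin k × Fin n → ℕ := fun p => n * mm p.1 + (p.2 : ℕ) with he
    have heinj : Function.Injective e := by
      rintro ⟨a, ja⟩ ⟨b, jb⟩ hab
      simp only [he] at hab
      have h1 : (ja : ℕ) = jb := by
        have := congrArg (· % n) hab
        simpa [Nat.mul_add_mod, Nat.mod_eq_of_lt ja.isLt, Nat.mod_eq_of_lt jb.isLt] using this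
      have h2 : mm a = mm b := by
        have := congrArg (· / n) hab
        simpa [Nat.mul_add_div hn0, Nat.div_eq_of_lt ja.isLt, Nat.div_eq_of_lt jb.isLt] using this
      exact Prod.ext (hmminj h2) (Fin.ext h1)
    have hli2 : LinearIndependent ℚ (g ∘ e) := hgli.comp e heinj
    rw [Fintype.linearIndependent_iff] at hli2
    have hval : ∀ (i : Fin k) (j : Fin n), g (e (i, j)) = u' i j := by
      intro i j
      rw [← hmm i]
    have hz := hli2 (fun p => q p.1 p.2) ?_
    · intro i
      funext j
      exact hz (i, j)
    · rw [Fintype.sum_prod_type]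
      simp only [Function.comp_apply, Rat.smul_def, hval]
      exact hq
end
end

section
/- For all integers k ≥ 1 and n ≥ 1, c(n,k) ≥ c(n,k−1) − 1. -/
open Pointwise

noncomputable section

namespace Stmt11Aux


/-- dot product of rows -/
def dot {n : ℕ} (w x : Fin n → ℝ) : ℝ := ∑ j, w j * x j

lemma mem_polyI {n m : ℕ} {A : Fin m → Fin n → ℝ} {b : Fin m → ℝ} {I : Set (Fin m)}
    {x : Fin n → ℝ} : x ∈ polyI A b I ↔ ∀ i ∈ I, dot (A i) x ≤ b i := Iff.rfl

lemma mem_intPts {n : ℕ} {S : Set (Fin n → ℝ)} {x : Fin n → ℝ} :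
    x ∈ intPts S ↔ x ∈ S ∧ x ∈ lat n := Iff.rfl

lemma polyI_anti {n m : ℕ} (A : Fin m → Fin n → ℝ) (b : Fin m → ℝ)
    {I I' : Set (Fin m)} (h : I ⊆ I') : polyI A b I' ⊆ polyI A b I :=
  fun _x hx i hi => hx i (h hi)

lemma intPts_sub {n m : ℕ} (A : Fin m → Fin n → ℝ) (b : Fin m → ℝ) (I : Set (Fin m)) :
    intPts (polyI A b Set.univ) ⊆ intPts (polyI A b I) :=
  fun x hx => ⟨polyI_anti A b (Set.subset_univ I) hx.1, hx.2⟩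

/-- appending extra rows -/
def app2 {α : Sort*} {m p : ℕ} (f : Fin m → α) (g : Fin p → α) : Fin (m + p) → α :=
  Fin.addCases f g

@[simp] lemma app2_left {α : Sort*} {m p : ℕ} (f : Fin m → α) (g : Fin p → α) (j : Fin m) :
    app2 f g (Fin.castAdd p j) = f j := Fin.addCases_left j

@[simp] lemma app2_right {α : Sort*} {m p : ℕ} (f : Fin m → α) (g : Fin p → α) (t : Fin p) :
    app2 f g (Fin.natAdd m t) = g t := Fin.addCases_right t

lemma mem_polyI_app2 {n m p : ℕ} {A : Fin m → Fin n → ℝ} {E : Fin p → Fin n → ℝ}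
    {b : Fin m → ℝ} {d : Fin p → ℝ} {S : Set (Fin (m + p))} {x : Fin n → ℝ} :
    x ∈ polyI (app2 A E) (app2 b d) S ↔
      ((∀ j : Fin m, Fin.castAdd p j ∈ S → dot (A j) x ≤ b j) ∧
       (∀ t : Fin p, Fin.natAdd m t ∈ S → dot (E t) x ≤ d t)) := by
  constructor
  · intro h
    refine ⟨fun j hj => ?_, fun t ht => ?_⟩
    · simpa [dot] using h _ hj
    · simpa [dot] using h _ ht
  · rintro ⟨h1, h2⟩ i hi
    induction i using Fin.addCases with
    | left j => simpa [dot] using h1 j hi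
    | right t => simpa [dot] using h2 t hi

lemma mem_polyI_app2_univ {n m p : ℕ} {A : Fin m → Fin n → ℝ} {E : Fin p → Fin n → ℝ}
    {b : Fin m → ℝ} {d : Fin p → ℝ} {x : Fin n → ℝ} :
    x ∈ polyI (app2 A E) (app2 b d) Set.univ ↔
      (x ∈ polyI A b Set.univ ∧ ∀ t : Fin p, dot (E t) x ≤ d t) := by
  rw [mem_polyI_app2]
  constructor
  · rintro ⟨h1, h2⟩
    exact ⟨fun i _ => h1 i (Set.mem_univ _), fun t => h2 t (Set.mem_univ _)⟩
  · rintro ⟨h1, h2⟩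
    exact ⟨fun j _ => h1 j (Set.mem_univ _), fun t _ => h2 t⟩

lemma card_left_filter_le {m p : ℕ} (I : Finset (Fin (m + p))) :
    (Finset.univ.filter (fun j : Fin m => Fin.castAdd p j ∈ I)).card ≤ I.card := by
  classical
  apply Finset.card_le_card_of_injOn (fun j => Fin.castAdd p j)
  · intro j hj
    simpa using (Finset.mem_filter.mp hj).2
  · intro a _ b _ hab
    exact Fin.castAdd_injective _ _ hab

/-- base expansion injectivity -/
lemma base_inj : ∀ {n : ℕ} (C : ℕ) (d : Fin n → ℤ), (∀ l, |d l| ≤ (C : ℤ)) →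
    (∑ l, d l * ((2 * C + 1 : ℤ)) ^ (l : ℕ)) = 0 → ∀ l, d l = 0 := by
  intro n
  induction n with
  | zero => intro C d _ _ l; exact l.elim0
  | succ n ih =>
    intro C d hd h
    rw [Fin.sum_univ_succ] at h
    have hrw : ∀ l : Fin n, d l.succ * (2 * (C : ℤ) + 1) ^ ((l.succ : ℕ)) =
        (d l.succ * (2 * (C : ℤ) + 1) ^ ((l : ℕ))) * (2 * C + 1) := by
      intro l
      rw [Fin.val_succ, pow_succ]
      ring
    rw [Finset.sum_congr rfl (fun l _ => hrw l), ← Finset.sum_mul] at h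
    set S := ∑ l : Fin n, d l.succ * (2 * (C : ℤ) + 1) ^ ((l : ℕ)) with hS
    have h0 : d 0 = -(S * (2 * C + 1)) := by
      have := h
      simp only [Fin.val_zero, pow_zero, mul_one] at this
      linarith
    have hC : (C : ℤ) < 2 * C + 1 := by omega
    have hSzero : S = 0 := by
      by_contra hne
      have h1 : (1 : ℤ) ≤ |S| := Int.one_le_abs (by simpa using hne)
      have habs : |d 0| = |S| * (2 * C + 1) := by
        rw [h0, abs_neg, abs_mul, abs_of_pos (show (0:ℤ) < 2*C+1 by omega)]
      have hge : (2 * (C : ℤ) + 1) ≤ |d 0| := by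
        rw [habs]
        nlinarith
      have hle := hd 0
      omega
    have hd0 : d 0 = 0 := by rw [h0, hSzero]; ring
    intro l
    refine Fin.cases hd0 ?_ l
    intro l'
    exact ih C (fun l => d l.succ) (fun l => hd l.succ) (by rw [← hS, hSzero]) l'

/-- the injective-on-a-box linear functional -/
def wvec (n C : ℕ) : Fin n → ℝ := fun l => ((2 * (2 * C) + 1 : ℕ) : ℝ) ^ (l : ℕ)

lemma wvec_inj {n C : ℕ} {x y : Fin n → ℝ} (hx : x ∈ lat n) (hy : y ∈ lat n)
    (hxb : ∀ l, |x l| ≤ (C : ℝ)) (hyb : ∀ l, |y l| ≤ (C : ℝ))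
    (h : dot (wvec n C) x = dot (wvec n C) y) : x = y := by
  choose ξ hξ using hx
  choose η hη using hy
  have hd : ∀ l, |ξ l - η l| ≤ ((2 * C : ℕ) : ℤ) := by
    intro l
    have h1 : |(ξ l : ℝ)| ≤ (C : ℝ) := by rw [← hξ l]; exact hxb l
    have h2 : |(η l : ℝ)| ≤ (C : ℝ) := by rw [← hη l]; exact hyb l
    have h1' : |ξ l| ≤ (C : ℤ) := by exact_mod_cast h1
    have h2' : |η l| ≤ (C : ℤ) := by exact_mod_cast h2
    calc |ξ l - η l| ≤ |ξ l| + |η l| := abs_sub _ _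
    _ ≤ (C : ℤ) + (C : ℤ) := add_le_add h1' h2'
    _ = ((2 * C : ℕ) : ℤ) := by push_cast; ring
  have hsum : (∑ l, (ξ l - η l) * (2 * ((2 * C : ℕ) : ℤ) + 1) ^ (l : ℕ)) = 0 := by
    have hR : ((∑ l, (ξ l - η l) * (2 * ((2 * C : ℕ) : ℤ) + 1) ^ (l : ℕ) : ℤ) : ℝ) = 0 := by
      push_cast
      have key : ∀ l : Fin n, ((ξ l : ℝ) - η l) * (2 * (2 * (C:ℝ)) + 1) ^ (l:ℕ)
          = wvec n C l * x l - wvec n C l * y l := by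
        intro l
        rw [hξ l, hη l]
        unfold wvec
        push_cast
        ring
      rw [Finset.sum_congr rfl (fun l _ => key l), Finset.sum_sub_distrib]
      have h' := h
      unfold dot at h'
      rw [h', sub_self]
    exact_mod_cast hR
  have hz := base_inj (2 * C) (fun l => ξ l - η l) hd hsum
  funext l
  rw [hξ l, hη l]
  have h0 : ξ l - η l = 0 := hz l
  have : ξ l = η l := by omega
  rw [this]


lemma exists_bound {n : ℕ} {G : Set (Fin n → ℝ)} (hG : G.Finite) :
    ∃ C : ℕ, ∀ x ∈ G, ∀ l, |x l| ≤ (C : ℝ) := by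
  classical
  refine ⟨hG.toFinset.sup (fun x => Finset.univ.sup (fun l => ⌈|x l|⌉₊)), ?_⟩
  intro x hx l
  calc |x l| ≤ (⌈|x l|⌉₊ : ℝ) := Nat.le_ceil _
  _ ≤ _ := by
      have h1 : ⌈|x l|⌉₊ ≤ Finset.univ.sup (fun l => ⌈|x l|⌉₊) :=
        Finset.le_sup (f := fun l => ⌈|x l|⌉₊) (Finset.mem_univ l)
      have h2 : Finset.univ.sup (fun l => ⌈|x l|⌉₊) ≤
          hG.toFinset.sup (fun x => Finset.univ.sup (fun l => ⌈|x l|⌉₊)) :=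
        Finset.le_sup (f := fun x => Finset.univ.sup (fun l => ⌈|x l|⌉₊)) (hG.mem_toFinset.mpr hx)
      exact_mod_cast le_trans h1 h2

lemma finite_latbox {n : ℕ} (C : ℕ) :
    {x : Fin n → ℝ | x ∈ lat n ∧ ∀ l, |x l| ≤ (C : ℝ)}.Finite := by
  classical
  have hsub : {x : Fin n → ℝ | x ∈ lat n ∧ ∀ l, |x l| ≤ (C : ℝ)} ⊆
      (fun (ζ : Fin n → ℤ) => fun l => ((ζ l : ℝ))) ''
        ↑((Finset.Icc (fun _ => -(C:ℤ)) (fun _ => (C:ℤ))) : Finset (Fin n → ℤ)) := by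
    rintro x ⟨hxl, hxb⟩
    choose ξ hξ using hxl
    refine ⟨ξ, ?_, by funext l; exact (hξ l).symm⟩
    simp only [Finset.coe_Icc, Set.mem_Icc]
    constructor
    · intro l
      have : |(ξ l : ℝ)| ≤ (C : ℝ) := by rw [← hξ l]; exact hxb l
      have : |ξ l| ≤ (C : ℤ) := by exact_mod_cast this
      exact (abs_le.mp this).1
    · intro l
      have : |(ξ l : ℝ)| ≤ (C : ℝ) := by rw [← hξ l]; exact hxb l
      have : |ξ l| ≤ (C : ℤ) := by exact_mod_cast this
      exact (abs_le.mp this).2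
  exact Set.Finite.subset (Set.Finite.image _ (Finset.finite_toSet _)) hsub

lemma dot_single {n : ℕ} (l : Fin n) (c : ℝ) (x : Fin n → ℝ) :
    dot (fun j => if j = l then c else 0) x = c * x l := by
  simp [dot, ite_mul, zero_mul]

lemma dot_neg {n : ℕ} (w x : Fin n → ℝ) : dot (fun j => -(w j)) x = -(dot w x) := by
  simp [dot, neg_mul]

lemma L2 {n k r : ℕ} (hn : 1 ≤ n) (hk : 1 ≤ k) (h : HellyBound n (k-1) r) :
    HellyBound n k (2 * n * r) := by
  classical
  intro m A b hfin hcard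
  set F := intPts (polyI A b Set.univ) with hF
  obtain ⟨C, hC⟩ := exists_bound hfin
  set w := wvec n C with hw
  have hFlat : ∀ x ∈ F, x ∈ lat n := fun x hx => hx.2
  have hinj : ∀ x ∈ F, ∀ y ∈ F, dot w x = dot w y → x = y := by
    intro x hx y hy hxy
    exact wvec_inj (hFlat x hx) (hFlat y hy) (hC x hx) (hC y hy) hxy
  rcases eq_or_lt_of_le hk with hk1 | hk2
  · -- k = 1
    obtain ⟨z, hFz⟩ := Set.ncard_eq_one.mp (by rw [hcard, ← hk1])
    have hzF : z ∈ F := by rw [hFz]; exact rfl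
    have hzlat := hFlat z hzF
    choose ζ hζ using hzlat
    -- auxiliary systems indexed by (l, sign)
    set e : Fin n × Bool → Fin n → ℝ :=
      fun p => fun j => if j = p.1 then (if p.2 then (1:ℝ) else -1) else 0 with he
    set β : Fin n × Bool → ℝ := fun p => if p.2 then z p.1 - 1 else -(z p.1) - 1 with hβ
    have hdot : ∀ p x, dot (e p) x = (if p.2 then x p.1 else -(x p.1)) := by
      intro p x
      rw [he, dot_single]
      rcases p.2 <;> simp
    have hsys : ∀ p, intPts (polyI (app2 A (fun _ : Fin 1 => e p))
        (app2 b (fun _ : Fin 1 => β p)) Set.univ) = (∅ : Set (Fin n → ℝ)) := by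
      intro p
      ext x
      simp only [Set.mem_empty_iff_false, iff_false, mem_intPts, mem_polyI_app2_univ]
      rintro ⟨⟨hx1, hx2⟩, hxlat⟩
      have hxF : x ∈ F := ⟨hx1, hxlat⟩
      have hxz : x = z := by rw [hFz] at hxF; exact hxF
      have hcon := hx2 0
      rw [hdot, hxz] at hcon
      by_cases hp : p.2 = true
      · simp [hβ, hp] at hcon; linarith
      · simp [hβ, hp] at hcon; linarith
    have happ := fun p : Fin n × Bool => h (m+1) (app2 A (fun _ : Fin 1 => e p))
      (app2 b (fun _ : Fin 1 => β p))
      (by rw [hsys p]; exact Set.finite_empty)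
      (by rw [hsys p, Set.ncard_empty, ← hk1])
    choose I hIc hIval using happ
    set J : Finset (Fin m) := Finset.univ.biUnion
      (fun p : Fin n × Bool => Finset.univ.filter (fun j : Fin m => Fin.castAdd 1 j ∈ I p)) with hJ
    refine ⟨J, ?_, ?_⟩
    · calc J.card ≤ ∑ p : Fin n × Bool, (Finset.univ.filter
          (fun j : Fin m => Fin.castAdd 1 j ∈ I p)).card := Finset.card_biUnion_le
      _ ≤ ∑ _p : Fin n × Bool, r := Finset.sum_le_sum (fun p _ =>
          le_trans (card_left_filter_le (I p)) (hIc p))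
      _ = (n * 2) * r := by simp [Finset.sum_const, Finset.card_univ, mul_assoc]
      _ ≤ 2 * n * r := by rw [mul_comm n 2]
    · refine Set.Subset.antisymm ?_ (intPts_sub A b _)
      intro x hx
      have hxlat : x ∈ lat n := hx.2
      have hviol : ∀ p : Fin n × Bool, β p < dot (e p) x := by
        intro p
        by_contra hyp
        push_neg at hyp
        have hxmem : x ∈ polyI (app2 A (fun _ : Fin 1 => e p))
            (app2 b (fun _ : Fin 1 => β p)) (↑(I p)) := by
          apply mem_polyI_app2.mpr
          constructor
          · intro j hj
            exact hx.1 j (by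
              simp only [Finset.mem_coe, hJ, Finset.mem_biUnion]
              exact ⟨p, Finset.mem_univ p, Finset.mem_filter.mpr ⟨Finset.mem_univ j, hj⟩⟩)
          · intro t _
            exact hyp
        have : x ∈ intPts (polyI (app2 A (fun _ : Fin 1 => e p))
            (app2 b (fun _ : Fin 1 => β p)) (↑(I p))) := ⟨hxmem, hxlat⟩
        rw [hIval p, hsys p] at this
        exact this
      have hxz : x = z := by
        choose ξ hξ using hxlat
        funext l
        have h1 := hviol (l, true)
        have h2 := hviol (l, false)
        rw [hdot] at h1 h2
        simp only [hβ] at h1 h2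
        simp at h1 h2
        rw [hξ l, hζ l] at h1 h2
        have hb1 : ζ l - 1 < ξ l := by exact_mod_cast h1
        have hb2 : ξ l < ζ l + 1 := by exact_mod_cast (by linarith : (ξ l : ℝ) < (ζ l : ℝ) + 1)
        have : ξ l = ζ l := by omega
        rw [hξ l, hζ l, this]
      rw [hxz]
      exact hzF
  · -- k ≥ 2
    have hk2' : 2 ≤ k := hk2
    set Ft := hfin.toFinset with hFt
    have hmemFt : ∀ {x}, x ∈ Ft ↔ x ∈ F := fun {x} => hfin.mem_toFinset
    have hFtcard : Ft.card = k := by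
      rw [← Set.ncard_eq_toFinset_card F hfin]; exact hcard
    have hFtne : Ft.Nonempty := Finset.card_pos.mp (by omega)
    obtain ⟨z, hzFt, hzmax⟩ := Finset.exists_max_image Ft (dot w) hFtne
    obtain ⟨z', hz'Ft, hz'min⟩ := Finset.exists_min_image Ft (dot w) hFtne
    have herase : (Ft.erase z).Nonempty := Finset.card_pos.mp (by
      rw [Finset.card_erase_of_mem hzFt]; omega)
    have herase' : (Ft.erase z').Nonempty := Finset.card_pos.mp (by
      rw [Finset.card_erase_of_mem hz'Ft]; omega)
    obtain ⟨u, huFt, humax⟩ := Finset.exists_max_image (Ft.erase z) (dot w) herase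
    obtain ⟨u', hu'Ft, hu'min⟩ := Finset.exists_min_image (Ft.erase z') (dot w) herase'
    have hzF : z ∈ F := hmemFt.mp hzFt
    have hz'F : z' ∈ F := hmemFt.mp hz'Ft
    have huF : u ∈ F := hmemFt.mp (Finset.mem_of_mem_erase huFt)
    have hu'F : u' ∈ F := hmemFt.mp (Finset.mem_of_mem_erase hu'Ft)
    have hulz : dot w u < dot w z := by
      rcases lt_or_eq_of_le (hzmax u (Finset.mem_of_mem_erase huFt)) with h' | h'
      · exact h'
      · exact absurd (hinj u huF z hzF h') (Finset.ne_of_mem_erase huFt)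
    have hz'lu : dot w z' < dot w u' := by
      rcases lt_or_eq_of_le (hz'min u' (Finset.mem_of_mem_erase hu'Ft)) with h' | h'
      · exact h'
      · exact absurd (hinj u' hu'F z' hz'F h'.symm) (Finset.ne_of_mem_erase hu'Ft)
    set βp : ℝ := (dot w z + dot w u) / 2 with hβp
    set βm : ℝ := -((dot w z' + dot w u') / 2) with hβm
    -- plus system
    have hsysp : intPts (polyI (app2 A (fun _ : Fin 1 => w))
        (app2 b (fun _ : Fin 1 => βp)) Set.univ) = F \ {z} := by
      ext x
      simp only [mem_intPts, mem_polyI_app2_univ, Set.mem_diff, Set.mem_singleton_iff]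
      constructor
      · rintro ⟨⟨hx1, hx2⟩, hxlat⟩
        have hxF : x ∈ F := ⟨hx1, hxlat⟩
        refine ⟨hxF, ?_⟩
        intro hxe
        have := hx2 0
        rw [hxe] at this
        rw [hβp] at this
        linarith
      · rintro ⟨hxF, hxz⟩
        refine ⟨⟨hxF.1, ?_⟩, hxF.2⟩
        intro t
        have hxe : x ∈ Ft.erase z := Finset.mem_erase.mpr ⟨hxz, hmemFt.mpr hxF⟩
        have := humax x hxe
        rw [hβp]
        linarith
    -- minus system
    have hsysm : intPts (polyI (app2 A (fun _ : Fin 1 => (fun j => -(w j))))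
        (app2 b (fun _ : Fin 1 => βm)) Set.univ) = F \ {z'} := by
      ext x
      simp only [mem_intPts, mem_polyI_app2_univ, Set.mem_diff, Set.mem_singleton_iff]
      constructor
      · rintro ⟨⟨hx1, hx2⟩, hxlat⟩
        have hxF : x ∈ F := ⟨hx1, hxlat⟩
        refine ⟨hxF, ?_⟩
        intro hxe
        have := hx2 0
        rw [dot_neg, hxe, hβm] at this
        linarith
      · rintro ⟨hxF, hxz⟩
        refine ⟨⟨hxF.1, ?_⟩, hxF.2⟩
        intro t
        have hxe : x ∈ Ft.erase z' := Finset.mem_erase.mpr ⟨hxz, hmemFt.mpr hxF⟩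
        have := hu'min x hxe
        rw [dot_neg, hβm]
        linarith
    have hfinp : (F \ {z} : Set (Fin n → ℝ)).Finite := hfin.diff
    have hfinm : (F \ {z'} : Set (Fin n → ℝ)).Finite := hfin.diff
    have hcardp : (F \ {z} : Set (Fin n → ℝ)).ncard = k - 1 := by
      rw [Set.ncard_diff_singleton_of_mem hzF, hcard]
    have hcardm : (F \ {z'} : Set (Fin n → ℝ)).ncard = k - 1 := by
      rw [Set.ncard_diff_singleton_of_mem hz'F, hcard]
    obtain ⟨Ip, hIpc, hIpval⟩ := h (m+1) (app2 A (fun _ : Fin 1 => w))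
      (app2 b (fun _ : Fin 1 => βp)) (by rw [hsysp]; exact hfinp) (by rw [hsysp]; exact hcardp)
    obtain ⟨Im, hImc, hImval⟩ := h (m+1) (app2 A (fun _ : Fin 1 => (fun j => -(w j))))
      (app2 b (fun _ : Fin 1 => βm)) (by rw [hsysm]; exact hfinm) (by rw [hsysm]; exact hcardm)
    set J : Finset (Fin m) :=
      (Finset.univ.filter (fun j : Fin m => Fin.castAdd 1 j ∈ Ip)) ∪
      (Finset.univ.filter (fun j : Fin m => Fin.castAdd 1 j ∈ Im)) with hJ
    refine ⟨J, ?_, ?_⟩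
    · calc J.card ≤ _ + _ := Finset.card_union_le _ _
      _ ≤ r + r := add_le_add (le_trans (card_left_filter_le Ip) hIpc)
          (le_trans (card_left_filter_le Im) hImc)
      _ ≤ 2 * n * r := by nlinarith
    · refine Set.Subset.antisymm ?_ (intPts_sub A b _)
      intro x hx
      have hxlat : x ∈ lat n := hx.2
      have hleft : ∀ {It : Finset (Fin (m+1))},
          (∀ j : Fin m, Fin.castAdd 1 j ∈ It → j ∈ J) →
          ∀ (E : Fin 1 → Fin n → ℝ) (d : Fin 1 → ℝ),
          (∀ t : Fin 1, Fin.natAdd m t ∈ It → dot (E t) x ≤ d t) →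
          x ∈ polyI (app2 A E) (app2 b d) (↑It) := by
        intro It hsub E d hcond
        apply mem_polyI_app2.mpr
        exact ⟨fun j hj => hx.1 j (hsub j hj), hcond⟩
      by_cases hc1 : Fin.natAdd m 0 ∈ Ip ∧ βp < dot w x
      · by_cases hc2 : Fin.natAdd m 0 ∈ Im ∧ βm < dot (fun j => -(w j)) x
        · exfalso
          have h1 := hc1.2
          have h2 := hc2.2
          rw [dot_neg] at h2
          have e1 : dot w z' ≤ dot w u := hz'min u (Finset.mem_of_mem_erase huFt)
          have e2 : dot w u' ≤ dot w z := hzmax u' (Finset.mem_of_mem_erase hu'Ft)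
          rw [hβp] at h1
          rw [hβm] at h2
          linarith
        · -- x satisfies the Im system
          have hxm : x ∈ polyI (app2 A (fun _ : Fin 1 => (fun j => -(w j))))
              (app2 b (fun _ : Fin 1 => βm)) (↑Im) := by
            apply hleft
            · intro j hj
              exact Finset.mem_union_right _ (Finset.mem_filter.mpr ⟨Finset.mem_univ j, hj⟩)
            · intro t ht
              have ht0 : (t : Fin 1) = 0 := Subsingleton.elim t 0
              subst ht0
              by_contra hlt
              push_neg at hlt
              exact hc2 ⟨ht, hlt⟩
          have : x ∈ intPts (polyI (app2 A (fun _ : Fin 1 => (fun j => -(w j))))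
              (app2 b (fun _ : Fin 1 => βm)) (↑Im)) := ⟨hxm, hxlat⟩
          rw [hImval, hsysm] at this
          exact this.1
      · -- x satisfies the Ip system
        have hxp : x ∈ polyI (app2 A (fun _ : Fin 1 => w))
            (app2 b (fun _ : Fin 1 => βp)) (↑Ip) := by
          apply hleft
          · intro j hj
            exact Finset.mem_union_left _ (Finset.mem_filter.mpr ⟨Finset.mem_univ j, hj⟩)
          · intro t ht
            have ht0 : (t : Fin 1) = 0 := Subsingleton.elim t 0
            subst ht0
            by_contra hlt
            push_neg at hlt
            exact hc1 ⟨ht, hlt⟩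
        have : x ∈ intPts (polyI (app2 A (fun _ : Fin 1 => w))
            (app2 b (fun _ : Fin 1 => βp)) (↑Ip)) := ⟨hxp, hxlat⟩
        rw [hIpval, hsysp] at this
        exact this.1

lemma dot_addrow {n : ℕ} (a w x : Fin n → ℝ) (ε : ℝ) :
    dot (fun j => a j + ε * w j) x = dot a x + ε * dot w x := by
  unfold dot
  rw [Finset.mul_sum, ← Finset.sum_add_distrib]
  apply Finset.sum_congr rfl
  intro j _
  ring

lemma key {n k c r : ℕ} (hk : 1 ≤ k) (hr : 2 ≤ r)
    (hwit : ¬ HellyBound n (k-1) (r-1)) (hc : HellyBound n k c) : r - 1 ≤ c := by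
  classical
  rw [HellyBound] at hwit
  push_neg at hwit
  obtain ⟨m, A, b, hfin, hcard, hno⟩ := hwit
  set F := intPts (polyI A b Set.univ) with hF
  -- minimal valid subsystem K
  set Vf : Finset (Finset (Fin m)) :=
    Finset.univ.filter (fun K : Finset (Fin m) => intPts (polyI A b ↑K) = F) with hVf
  have hVne : (Finset.univ : Finset (Fin m)) ∈ Vf := by
    refine Finset.mem_filter.mpr ⟨Finset.mem_univ _, ?_⟩
    rw [Finset.coe_univ]
  obtain ⟨K, hKV, hKmin⟩ := Finset.exists_min_image Vf Finset.card ⟨_, hVne⟩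
  have hKval : intPts (polyI A b ↑K) = F := (Finset.mem_filter.mp hKV).2
  have hKcard : r ≤ K.card := by
    by_contra h'
    push_neg at h'
    exact hno K (by omega) hKval
  -- witnesses of non-redundancy
  have hwitK : ∀ j : Fin m, j ∈ K → ∃ y, y ∈ intPts (polyI A b ↑(K.erase j)) ∧ y ∉ F := by
    intro j hj
    have h1 : F ⊆ intPts (polyI A b ↑(K.erase j)) := by
      rw [hF]; exact intPts_sub A b _
    have h2 : intPts (polyI A b ↑(K.erase j)) ≠ F := by
      intro heq
      have hmem : K.erase j ∈ Vf := Finset.mem_filter.mpr ⟨Finset.mem_univ _, heq⟩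
      have hle := hKmin _ hmem
      have hcar := Finset.card_erase_of_mem hj
      have hpos : 0 < K.card := by omega
      omega
    by_contra hne
    push_neg at hne
    exact h2 (Set.Subset.antisymm (fun y hy => hne y hy) h1)
  choose! zf hz1 hz2 using hwitK
  have hviol : ∀ j ∈ K, b j < dot (A j) (zf j) := by
    intro j hj
    by_contra hle
    push_neg at hle
    have hpoly : zf j ∈ polyI A b ↑K := by
      intro q hq
      rcases eq_or_ne q j with rfl | hne
      · exact hle
      · exact (hz1 j hj).1 q (Finset.mem_coe.mpr (Finset.mem_erase.mpr ⟨hne, hq⟩))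
    exact hz2 j hj (hKval ▸ ⟨hpoly, (hz1 j hj).2⟩)
  obtain ⟨i, hiK⟩ := Finset.card_pos.mp (show 0 < K.card by omega)
  -- bound box and functional
  set G : Set (Fin n → ℝ) := F ∪ (zf '' ↑K) with hG
  have hGfin : G.Finite := hfin.union ((K.finite_toSet).image zf)
  obtain ⟨C, hC⟩ := exists_bound hGfin
  set w := wvec n C with hw
  set Sbox : Set (Fin n → ℝ) :=
    {x | x ∈ intPts (polyI A b ↑(K.erase i)) ∧ x ∉ F ∧ ∀ l, |x l| ≤ (C:ℝ)} with hSbox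
  have hz0G : zf i ∈ G := Or.inr ⟨i, Finset.mem_coe.mpr hiK, rfl⟩
  have hz0S : zf i ∈ Sbox := ⟨hz1 i hiK, hz2 i hiK, fun l => hC _ hz0G l⟩
  have hSfin : Sbox.Finite := (finite_latbox C).subset (fun x hx => ⟨hx.1.2, hx.2.2⟩)
  have hSne : hSfin.toFinset.Nonempty := ⟨zf i, hSfin.mem_toFinset.mpr hz0S⟩
  obtain ⟨z₁, hz₁, hmin1⟩ := Finset.exists_min_image hSfin.toFinset (dot (A i)) hSne
  set T := hSfin.toFinset.filter (fun x => dot (A i) x = dot (A i) z₁) with hT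
  have hTne : T.Nonempty := ⟨z₁, Finset.mem_filter.mpr ⟨hz₁, rfl⟩⟩
  obtain ⟨z, hzT, hmin2⟩ := Finset.exists_min_image T (dot w) hTne
  have hzS : z ∈ Sbox := hSfin.mem_toFinset.mp (Finset.mem_filter.mp hzT).1
  have hzval : dot (A i) z = dot (A i) z₁ := (Finset.mem_filter.mp hzT).2
  have hminA : ∀ s ∈ Sbox, dot (A i) z ≤ dot (A i) s := by
    intro s hs
    rw [hzval]
    exact hmin1 s (hSfin.mem_toFinset.mpr hs)
  have hminw : ∀ s ∈ Sbox, dot (A i) s = dot (A i) z → dot w z ≤ dot w s := by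
    intro s hs heq
    exact hmin2 s (Finset.mem_filter.mpr ⟨hSfin.mem_toFinset.mpr hs, by rw [heq, hzval]⟩)
  set v := dot (A i) z with hv
  have hδ : b i < v := by
    by_contra hle
    push_neg at hle
    have hpoly : z ∈ polyI A b ↑K := by
      intro q hq
      rcases eq_or_ne q i with rfl | hne
      · exact hle
      · exact hzS.1.1 q (Finset.mem_coe.mpr (Finset.mem_erase.mpr ⟨hne, hq⟩))
    exact hzS.2.1 (hKval ▸ ⟨hpoly, hzS.1.2⟩)
  -- epsilon
  have hGne : hGfin.toFinset.Nonempty := ⟨zf i, hGfin.mem_toFinset.mpr hz0G⟩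
  obtain ⟨g₀, hg₀, hg₀max⟩ := Finset.exists_max_image hGfin.toFinset (dot w) hGne
  set Dm : ℝ := dot w g₀ - dot w z with hDm
  set ε : ℝ := (v - b i) / (max Dm 1) with hε
  have hmaxpos : (0:ℝ) < max Dm 1 := lt_of_lt_of_le zero_lt_one (le_max_right _ _)
  have hεpos : 0 < ε := div_pos (by linarith) hmaxpos
  have hεG : ∀ x ∈ G, ε * (dot w x - dot w z) ≤ v - b i := by
    intro x hxG
    have h1 : dot w x - dot w z ≤ Dm := by
      have := hg₀max x (hGfin.mem_toFinset.mpr hxG)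
      rw [hDm]; linarith
    have h2 : ε * (dot w x - dot w z) ≤ ε * Dm :=
      mul_le_mul_of_nonneg_left h1 hεpos.le
    have h3 : ε * Dm ≤ v - b i := by
      rcases le_total Dm 1 with hcase | hcase
      · have hm : max Dm 1 = 1 := max_eq_right hcase
        rw [hε, hm, div_one]
        nlinarith
      · have hm : max Dm 1 = Dm := max_eq_left hcase
        rw [hε, hm, div_mul_cancel₀ _ (by linarith : Dm ≠ 0)]
    linarith
  -- the system W
  set A1 : Fin m → Fin n → ℝ := fun j => if j ∈ K.erase i then A j else 0 with hA1
  set b1 : Fin m → ℝ := fun j => if j ∈ K.erase i then b j else 0 with hb1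
  set box1 : Fin n → Fin n → ℝ := fun l => (fun j => if j = l then (1:ℝ) else 0) with hbox1
  set box2 : Fin n → Fin n → ℝ := fun l => (fun j => if j = l then (-1:ℝ) else 0) with hbox2
  set d1 : Fin n → ℝ := fun _ => (C:ℝ) with hd1
  set AW := app2 (app2 (app2 (app2 A1 box1) box2) (fun _ : Fin 1 => A i))
    (fun _ : Fin 1 => (fun j => A i j + ε * w j)) with hAW
  set bW := app2 (app2 (app2 (app2 b1 d1) d1) (fun _ : Fin 1 => v))
    (fun _ : Fin 1 => v + ε * dot w z) with hbW
  have hmemW : ∀ x : Fin n → ℝ, x ∈ polyI AW bW Set.univ ↔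
      ((∀ j ∈ K.erase i, dot (A j) x ≤ b j) ∧ (∀ l, x l ≤ (C:ℝ)) ∧
       (∀ l, -(x l) ≤ (C:ℝ)) ∧ dot (A i) x ≤ v ∧
       dot (A i) x + ε * dot w x ≤ v + ε * dot w z) := by
    intro x
    rw [hAW, hbW, mem_polyI_app2_univ, mem_polyI_app2_univ, mem_polyI_app2_univ,
      mem_polyI_app2_univ]
    simp only [Fin.forall_fin_one]
    constructor
    · rintro ⟨⟨⟨⟨hrows, hb1'⟩, hb2'⟩, ht0⟩, ht1⟩
      refine ⟨?_, ?_, ?_, ht0, ?_⟩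
      · intro j hj
        have := hrows j (Set.mem_univ j)
        simp only [hA1, hb1, hj, if_true] at this
        exact this
      · intro l
        have := hb1' l
        simp only [hbox1, hd1, dot_single, one_mul] at this
        exact this
      · intro l
        have := hb2' l
        simp only [hbox2, hd1, dot_single] at this
        linarith
      · rw [dot_addrow] at ht1
        exact ht1
    · rintro ⟨hrows, hb1', hb2', ht0, ht1⟩
      refine ⟨⟨⟨⟨?_, ?_⟩, ?_⟩, ht0⟩, ?_⟩
      · intro j _
        simp only [hA1, hb1]
        by_cases hj : j ∈ K.erase i
        · simp only [hj, if_true]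
          exact hrows j hj
        · simp only [hj, if_false]
          simp [dot]
      · intro l
        simp only [hbox1, hd1, dot_single, one_mul]
        exact hb1' l
      · intro l
        simp only [hbox2, hd1, dot_single]
        have := hb2' l
        linarith
      · rw [dot_addrow]
        exact ht1
  have hzlat : z ∈ lat n := hzS.1.2
  have hIntW : intPts (polyI AW bW Set.univ) = insert z F := by
    ext x
    simp only [mem_intPts, hmemW, Set.mem_insert_iff]
    constructor
    · rintro ⟨⟨h1, h2, h3, h4, h5⟩, hxlat⟩
      by_cases hxF : x ∈ F
      · exact Or.inr hxF
      · left
        have hxpoly : x ∈ polyI A b ↑(K.erase i) := by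
          intro j hj
          exact h1 j (Finset.mem_coe.mp hj)
        have hxbox : ∀ l, |x l| ≤ (C:ℝ) := fun l => abs_le.mpr ⟨by linarith [h3 l], h2 l⟩
        have hxS : x ∈ Sbox := ⟨⟨hxpoly, hxlat⟩, hxF, hxbox⟩
        have hA : dot (A i) x = v := le_antisymm h4 (hminA x hxS)
        have hwle : dot w x ≤ dot w z := by
          rw [hA] at h5
          have h6 : ε * dot w x ≤ ε * dot w z := by linarith
          exact le_of_mul_le_mul_left h6 hεpos
        have hwge : dot w z ≤ dot w x := hminw x hxS hA
        exact wvec_inj hxlat hzlat hxbox (fun l => hzS.2.2 l) (le_antisymm hwle hwge)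
    · rintro (rfl | hxF)
      · refine ⟨⟨?_, ?_, ?_, le_of_eq rfl, le_of_eq rfl⟩, hzlat⟩
        · intro j hj
          exact hzS.1.1 j (Finset.mem_coe.mpr hj)
        · intro l
          exact le_trans (le_abs_self _) (hzS.2.2 l)
        · intro l
          exact le_trans (neg_le_abs _) (hzS.2.2 l)
      · have hxG : x ∈ G := Or.inl hxF
        have hbi : dot (A i) x ≤ b i := hxF.1 i (Set.mem_univ i)
        refine ⟨⟨?_, ?_, ?_, by linarith, ?_⟩, hxF.2⟩
        · intro j hj
          exact hxF.1 j (Set.mem_univ j)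
        · intro l
          exact le_trans (le_abs_self _) (hC x hxG l)
        · intro l
          exact le_trans (neg_le_abs _) (hC x hxG l)
        · have := hεG x hxG
          linarith
  have hzF : z ∉ F := hzS.2.1
  have hWfin : (intPts (polyI AW bW Set.univ)).Finite := by
    rw [hIntW]; exact hfin.insert z
  have hWcard : (intPts (polyI AW bW Set.univ)).ncard = k := by
    rw [hIntW, Set.ncard_insert_of_notMem hzF hfin, hcard]
    omega
  obtain ⟨I, hIc, hIval⟩ := hc _ AW bW hWfin hWcard
  -- every row of K.erase i must be in I
  set idx : Fin m → Fin (m + n + n + 1 + 1) :=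
    fun j => Fin.castAdd 1 (Fin.castAdd 1 (Fin.castAdd n (Fin.castAdd n j))) with hidx
  have hidxinj : Function.Injective idx := by
    intro a b' hab
    rw [hidx] at hab
    exact Fin.castAdd_injective _ _ (Fin.castAdd_injective _ _
      (Fin.castAdd_injective _ _ (Fin.castAdd_injective _ _ hab)))
  have hin : ∀ j ∈ K.erase i, idx j ∈ I := by
    intro j hj
    by_contra hnot
    have hjK : j ∈ K := Finset.mem_of_mem_erase hj
    have hjne : j ≠ i := Finset.ne_of_mem_erase hj
    have hzjG : zf j ∈ G := Or.inr ⟨j, Finset.mem_coe.mpr hjK, rfl⟩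
    have hbij : dot (A i) (zf j) ≤ b i :=
      (hz1 j hjK).1 i (Finset.mem_coe.mpr (Finset.mem_erase.mpr ⟨fun h => hjne h.symm, hiK⟩))
    have hrows : ∀ q : Fin (m + n + n + 1 + 1), q ≠ idx j → dot (AW q) (zf j) ≤ bW q := by
      intro q
      induction q using Fin.addCases with
      | right t =>
        intro _
        rw [hAW, hbW, app2_right, app2_right, dot_addrow]
        have := hεG (zf j) hzjG
        linarith
      | left q1 =>
        induction q1 using Fin.addCases with
        | right t =>
          intro _
          rw [hAW, hbW, app2_left, app2_left, app2_right, app2_right]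
          linarith
        | left q2 =>
          induction q2 using Fin.addCases with
          | right l =>
            intro _
            rw [hAW, hbW, app2_left, app2_left, app2_left, app2_left,
              app2_right, app2_right]
            simp only [hbox2, hd1, dot_single]
            have h1 := hC (zf j) hzjG l
            have h2 := neg_le_abs ((zf j) l)
            linarith
          | left q3 =>
            induction q3 using Fin.addCases with
            | right l =>
              intro _
              rw [hAW, hbW, app2_left, app2_left, app2_left, app2_left, app2_left,
                app2_left, app2_right, app2_right]
              simp only [hbox1, hd1, dot_single, one_mul]
              exact le_trans (le_abs_self _) (hC (zf j) hzjG l)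
            | left j' =>
              intro hne
              rw [hAW, hbW, app2_left, app2_left, app2_left, app2_left, app2_left,
                app2_left, app2_left, app2_left]
              simp only [hA1, hb1]
              by_cases hj' : j' ∈ K.erase i
              · simp only [hj', if_true]
                have hj'j : j' ≠ j := by
                  intro h
                  apply hne
                  rw [hidx, h]
                exact (hz1 j hjK).1 j' (Finset.mem_coe.mpr
                  (Finset.mem_erase.mpr ⟨hj'j, Finset.mem_of_mem_erase hj'⟩))
              · simp only [hj', if_false]
                simp [dot]
    have hzjW : zf j ∈ polyI AW bW ↑I := by
      intro q hq
      apply hrows q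
      intro h
      rw [h] at hq
      exact hnot (Finset.mem_coe.mp hq)
    have hzjmem : zf j ∈ intPts (polyI AW bW ↑I) := ⟨hzjW, (hz1 j hjK).2⟩
    rw [hIval, hIntW] at hzjmem
    rcases hzjmem with hzeq | hzmemF
    · have h1 : dot (A j) z ≤ b j := hzS.1.1 j (Finset.mem_coe.mpr hj)
      have h2 : b j < dot (A j) (zf j) := hviol j hjK
      rw [hzeq] at h2
      linarith
    · exact hz2 j hjK hzmemF
  have hcardle : (K.erase i).card ≤ I.card := by
    have himg : (K.erase i).image idx ⊆ I := by
      intro q hq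
      obtain ⟨j, hj, rfl⟩ := Finset.mem_image.mp hq
      exact hin j hj
    calc (K.erase i).card = ((K.erase i).image idx).card :=
          (Finset.card_image_of_injective _ hidxinj).symm
    _ ≤ I.card := Finset.card_le_card himg
  have hKe : (K.erase i).card = K.card - 1 := Finset.card_erase_of_mem hiK
  omega

end Stmt11Aux

/-- `c(n,k) ≥ c(n,k−1) − 1`. -/
theorem stmt11 (n k : ℕ) (hn : 1 ≤ n) (hk : 1 ≤ k) :
    cnk n (k - 1) - 1 ≤ cnk n k := by
  set r := cnk n (k - 1) with hrdef
  by_cases hr : r ≤ 1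
  · omega
  · push_neg at hr
    have hne : {c | HellyBound n (k-1) c}.Nonempty := by
      by_contra hempty
      rw [Set.not_nonempty_iff_eq_empty] at hempty
      have hzero : r = 0 := by rw [hrdef, cnk, hempty, Nat.sInf_empty]
      omega
    have hmem : HellyBound n (k-1) r := Nat.sInf_mem hne
    have hknon : HellyBound n k (2*n*r) := Stmt11Aux.L2 hn hk hmem
    have hkne : {c | HellyBound n k c}.Nonempty := ⟨_, hknon⟩
    have hcmem : HellyBound n k (cnk n k) := Nat.sInf_mem hkne
    have hNot : ¬ HellyBound n (k-1) (r-1) := by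
      intro hcon
      have hle : r ≤ r - 1 := Nat.sInf_le hcon
      omega
    have hfinal := Stmt11Aux.key hk (by omega : 2 ≤ r) hNot hcmem
    omega
end
end

section
/- For every fixed integer n ≥ 2 there exists a constant C > 0 such that for every integer s ≥ 1, μ_c(n,s) ≤ C · s^{(n+1)/(n−1)}. Consequently, there exists a constant C' > 0 such that s_{n,k} := min{s : μ_c(n,s) ≥ k} satisfies s_{n,k} ≥ C' · k^{(n−1)/(n+1)} for all k ≥ 1. -/
open Pointwise

noncomputable section

/-! ### Auxiliary machinery for statement 15 -/

open Finset in
noncomputable def phiMap (d : ℕ) (a : Fin d → ℕ) : Fin (d+1) → ℝ :=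
  Fin.snoc (fun i => (a i : ℝ)) (∑ i, (a i : ℝ)^2)

lemma phiMap_castSucc (d : ℕ) (a : Fin d → ℕ) (i : Fin d) :
    phiMap d a i.castSucc = (a i : ℝ) := by simp [phiMap]

lemma phiMap_last (d : ℕ) (a : Fin d → ℕ) :
    phiMap d a (Fin.last d) = ∑ i, (a i : ℝ)^2 := by simp [phiMap]

lemma phiMap_inj (d : ℕ) : Function.Injective (phiMap d) := by
  intro a b h
  funext i
  have := congrFun h i.castSucc
  rw [phiMap_castSucc, phiMap_castSucc] at this
  exact_mod_cast this

lemma convexPos_sub_range {d : ℕ} (V : Set (Fin (d+1) → ℝ))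
    (hV : V ⊆ Set.range (phiMap d)) : ConvexPos V := by
  rintro v hv hcon
  obtain ⟨a, rfl⟩ := hV hv
  set L : (Fin (d+1) → ℝ) → ℝ :=
    fun x => x (Fin.last d) - ∑ i, (2 * (a i : ℝ)) * x i.castSucc with hL
  have hlin : IsLinearMap ℝ L := by
    constructor
    · intro x y
      simp only [hL, Pi.add_apply, mul_add]
      rw [Finset.sum_add_distrib]; ring
    · intro c x
      simp only [hL, Pi.smul_apply, smul_eq_mul, mul_sub, Finset.mul_sum]
      congr 1
      apply Finset.sum_congr rfl
      intro i _; ring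
  have hval : ∀ b : Fin d → ℕ, L (phiMap d b)
      = (∑ i, ((b i : ℝ) - (a i : ℝ))^2) - ∑ i, (a i : ℝ)^2 := by
    intro b
    simp only [hL, phiMap_last, phiMap_castSucc]
    rw [← Finset.sum_sub_distrib, ← Finset.sum_sub_distrib]
    apply Finset.sum_congr rfl
    intro i _; ring
  have hva : L (phiMap d a) = - ∑ i, (a i : ℝ)^2 := by
    rw [hval]; simp
  have hsub : V \ {phiMap d a} ⊆ {x | L (phiMap d a) < L x} := by
    rintro x ⟨hxV, hxne⟩
    obtain ⟨b, rfl⟩ := hV hxV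
    have hba : b ≠ a := fun h => hxne (by rw [h]; rfl)
    rw [Set.mem_setOf_eq, hva, hval]
    have hpos : 0 < ∑ i, ((b i : ℝ) - (a i : ℝ))^2 := by
      obtain ⟨i, hi⟩ := Function.ne_iff.mp hba
      apply Finset.sum_pos' (fun j _ => sq_nonneg _) ⟨i, Finset.mem_univ i, ?_⟩
      have : (b i : ℝ) ≠ (a i : ℝ) := by exact_mod_cast hi
      have h0 : (b i : ℝ) - (a i : ℝ) ≠ 0 := sub_ne_zero.mpr this
      positivity
    linarith
  have h3 := convexHull_min hsub (convex_halfSpace_gt hlin _) hcon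
  exact lt_irrefl _ (Set.mem_setOf_eq ▸ h3)

lemma convexPos_mono {n : ℕ} {W V : Set (Fin n → ℝ)} (hWV : W ⊆ V)
    (hV : ConvexPos V) : ConvexPos W := by
  intro v hv hcon
  exact hV v (hWV hv) (convexHull_mono (Set.diff_subset_diff_left hWV) hcon)

lemma half_smul_eq {n : ℕ} {x y : Fin n → ℝ} (h : (1/2 : ℝ) • (x + y) = x) :
    y = x := by
  have h2 := congrArg (fun z => (2:ℝ) • z) h
  simp only [smul_smul] at h2
  norm_num at h2
  have : x + y = x + x := by rw [h2, two_smul]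
  exact add_left_cancel this

lemma mid_not_mem {n : ℕ} {V : Set (Fin n → ℝ)} (hV : ConvexPos V)
    {x y : Fin n → ℝ} (hx : x ∈ V) (hy : y ∈ V) (hxy : x ≠ y) :
    (1/2 : ℝ) • (x + y) ∉ V := by
  intro hp
  set p := (1/2 : ℝ) • (x + y) with hpdef
  have hpx : p ≠ x := by
    intro h; exact hxy (half_smul_eq h).symm
  have hpy : p ≠ y := by
    intro h
    rw [hpdef, add_comm] at h
    exact hxy (half_smul_eq h)
  apply hV p hp
  have hxm : x ∈ V \ {p} := ⟨hx, fun h => hpx (Set.mem_singleton_iff.mp h).symm⟩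
  have hym : y ∈ V \ {p} := ⟨hy, fun h => hpy (Set.mem_singleton_iff.mp h).symm⟩
  have hseg : p ∈ segment ℝ x y :=
    ⟨1/2, 1/2, by norm_num, by norm_num, by norm_num, by rw [hpdef, smul_add]⟩
  exact (convex_convexHull ℝ _).segment_subset (subset_convexHull ℝ _ hxm)
    (subset_convexHull ℝ _ hym) hseg

lemma midpts_mono {n : ℕ} {W V : Set (Fin n → ℝ)} (hWV : W ⊆ V)
    (hV : ConvexPos V) : midpts W ⊆ midpts V := by
  rintro p ⟨⟨x, hx, y, hy, rfl⟩, hpW⟩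
  refine ⟨⟨x, hWV hx, y, hWV hy, rfl⟩, ?_⟩
  rcases eq_or_ne x y with rfl | hxy
  · intro _
    apply hpW
    have : (1/2 : ℝ) • (x + x) = x := by rw [← two_smul ℝ x, smul_smul]; norm_num
    rw [this]; exact hx
  · exact mid_not_mem hV (hWV hx) (hWV hy) hxy

lemma midpts_finite {n : ℕ} {V : Set (Fin n → ℝ)} (hfin : V.Finite) :
    (midpts V).Finite := by
  apply Set.Finite.subset (Set.Finite.image2 (fun x y => (1/2:ℝ) • (x + y)) hfin hfin)
  rintro p ⟨⟨x, hx, y, hy, rfl⟩, -⟩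
  exact Set.mem_image2_of_mem hx hy

lemma midpts_lower {n : ℕ} {V : Set (Fin n → ℝ)} (hV : ConvexPos V)
    (hfin : V.Finite) : V.ncard - 1 ≤ (midpts V).ncard := by
  rcases Set.eq_empty_or_nonempty V with rfl | ⟨v, hv⟩
  · simp
  have hsub : (fun w => (1/2:ℝ) • (v + w)) '' (V \ {v}) ⊆ midpts V := by
    rintro p ⟨w, ⟨hwV, hwv⟩, rfl⟩
    refine ⟨⟨v, hv, w, hwV, rfl⟩, mid_not_mem hV hv hwV ?_⟩
    intro h; exact hwv (by simp [h.symm])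
  have hinj : Set.InjOn (fun w => (1/2:ℝ) • (v + w)) (V \ {v}) := by
    intro w₁ _ w₂ _ h
    have := smul_right_injective (Fin n → ℝ) (by norm_num : (1/2:ℝ) ≠ 0) h
    exact add_left_cancel this
  calc V.ncard - 1 = (V \ {v}).ncard := by
        rw [Set.ncard_diff_singleton_of_mem hv]
    _ = ((fun w => (1/2:ℝ) • (v + w)) '' (V \ {v})).ncard :=
        (Set.ncard_image_of_injOn hinj).symm
    _ ≤ (midpts V).ncard := Set.ncard_le_ncard hsub (midpts_finite hfin)

open Finset in
lemma construction (d s : ℕ) (hd : 1 ≤ d) (hs : 1 ≤ s) :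
    ∃ V : Set (Fin (d+1) → ℝ), ConvexPos V ∧ V.Finite ∧ V.ncard = s ∧
      ((midpts V).ncard : ℝ) ≤ (3*(d:ℝ)*2^(2*d+2)) * (s:ℝ) ^ (((d:ℝ)+2)/(d:ℝ)) := by
  have hs1 : (1:ℝ) ≤ (s:ℝ) := by exact_mod_cast hs
  set r : ℝ := (s:ℝ) ^ ((d:ℝ)⁻¹) with hr
  have hr1 : 1 ≤ r := Real.one_le_rpow hs1 (by positivity)
  set g : ℕ := ⌈r⌉₊ with hgdef
  have hg1 : 1 ≤ g := Nat.one_le_ceil_iff.mpr (by linarith)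
  have hrg : r ≤ (g:ℝ) := Nat.le_ceil r
  have hg2r : (g:ℝ) ≤ 2*r := by
    have := Nat.ceil_lt_add_one (by linarith : (0:ℝ) ≤ r)
    calc (g:ℝ) ≤ r + 1 := le_of_lt this
      _ ≤ 2*r := by linarith
  have hrd : r ^ d = (s:ℝ) := Real.rpow_inv_natCast_pow (by positivity) (by omega)
  have hsg : s ≤ g ^ d := by
    have : (s:ℝ) ≤ (g:ℝ)^d := by
      rw [← hrd]; exact pow_le_pow_left₀ (by linarith) hrg d
    exact_mod_cast this
  set G : Finset (Fin d → ℕ) := Fintype.piFinset (fun _ => Finset.range g) with hG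
  set Vfin : Finset (Fin (d+1) → ℝ) := G.image (phiMap d) with hV
  have hVcard : Vfin.card = g ^ d := by
    rw [hV, Finset.card_image_of_injective _ (phiMap_inj d), hG,
      Fintype.card_piFinset]
    simp
  obtain ⟨W, hWsub, hWcard⟩ := Finset.exists_subset_card_eq (hVcard ▸ hsg)
  have hWrange : (↑W : Set (Fin (d+1) → ℝ)) ⊆ Set.range (phiMap d) := by
    intro x hx
    obtain ⟨a, _, rfl⟩ := Finset.mem_image.mp (hWsub hx)
    exact ⟨a, rfl⟩
  have hVposn : ConvexPos (↑Vfin : Set (Fin (d+1) → ℝ)) := by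
    apply convexPos_sub_range
    rintro x hx
    obtain ⟨a, _, rfl⟩ := Finset.mem_image.mp hx
    exact ⟨a, rfl⟩
  set M : Finset (Fin (d+1) → ℝ) :=
    Finset.image₂ (fun (y : Fin d → ℕ) (t : ℕ) =>
        (Fin.snoc (fun i => (y i : ℝ)/2) ((t:ℝ)/2) : Fin (d+1) → ℝ))
      (Fintype.piFinset fun _ => Finset.range (2*g)) (Finset.range (2*d*g^2+1))
    with hM
  have hmidsub : midpts (↑Vfin : Set (Fin (d+1) → ℝ)) ⊆ ↑M := by
    rintro p ⟨⟨x, hx, y, hy, rfl⟩, -⟩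
    obtain ⟨a, ha, rfl⟩ := Finset.mem_image.mp hx
    obtain ⟨b, hb, rfl⟩ := Finset.mem_image.mp hy
    have ha' : ∀ i, a i < g := fun i => Finset.mem_range.mp (Fintype.mem_piFinset.mp ha i)
    have hb' : ∀ i, b i < g := fun i => Finset.mem_range.mp (Fintype.mem_piFinset.mp hb i)
    rw [Finset.mem_coe, hM, Finset.mem_image₂]
    refine ⟨fun i => a i + b i, ?_, ∑ i, (a i^2 + b i^2), ?_, ?_⟩
    · rw [Fintype.mem_piFinset]
      intro i
      rw [Finset.mem_range]
      have := ha' i; have := hb' i; omega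
    · rw [Finset.mem_range, Nat.lt_succ_iff]
      calc ∑ i, (a i^2 + b i^2) ≤ ∑ _i : Fin d, (g^2 + g^2) := by
            apply Finset.sum_le_sum
            intro i _
            have h1 : a i ^ 2 ≤ g ^ 2 := Nat.pow_le_pow_left (le_of_lt (ha' i)) 2
            have h2 : b i ^ 2 ≤ g ^ 2 := Nat.pow_le_pow_left (le_of_lt (hb' i)) 2
            omega
        _ = 2*d*g^2 := by
            rw [Finset.sum_const, Finset.card_univ, Fintype.card_fin, smul_eq_mul]; ring
    · funext j
      refine Fin.lastCases ?_ ?_ j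
      · simp only [Fin.snoc_last, Pi.smul_apply, Pi.add_apply, smul_eq_mul,
          phiMap_last]
        push_cast
        rw [Finset.sum_add_distrib]
        ring
      · intro i
        simp only [Fin.snoc_castSucc, Pi.smul_apply, Pi.add_apply, smul_eq_mul,
          phiMap_castSucc]
        push_cast
        ring
  have hMcard : M.card ≤ (2*g)^d * (2*d*g^2+1) := by
    calc M.card ≤ (Fintype.piFinset fun _ : Fin d => Finset.range (2*g)).card *
          (Finset.range (2*d*g^2+1)).card := Finset.card_image₂_le _ _ _
      _ = (2*g)^d * (2*d*g^2+1) := by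
          rw [Fintype.card_piFinset, Finset.card_range]
          simp
  refine ⟨↑W, convexPos_sub_range _ hWrange, W.finite_toSet, by simp [hWcard], ?_⟩
  have hcount : (midpts (↑W : Set (Fin (d+1) → ℝ))).ncard ≤ (2*g)^d * (2*d*g^2+1) := by
    calc (midpts (↑W : Set (Fin (d+1) → ℝ))).ncard ≤ (↑M : Set (Fin (d+1) → ℝ)).ncard := by
          apply Set.ncard_le_ncard _ M.finite_toSet
          exact (midpts_mono (by exact_mod_cast hWsub) hVposn).trans hmidsub
      _ = M.card := Set.ncard_coe_finset M
      _ ≤ _ := hMcard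
  have hd1 : (1:ℝ) ≤ (d:ℝ) := by exact_mod_cast hd
  have hg1' : (1:ℝ) ≤ (g:ℝ) := by exact_mod_cast hg1
  have hrpow : (r:ℝ) ^ (d+2) = (s:ℝ) ^ (((d:ℝ)+2)/(d:ℝ)) := by
    rw [hr, ← Real.rpow_natCast ((s:ℝ) ^ ((d:ℝ)⁻¹)) (d+2), ← Real.rpow_mul (by positivity)]
    congr 1
    push_cast
    field_simp
  calc ((midpts (↑W : Set (Fin (d+1) → ℝ))).ncard : ℝ)
      ≤ ((2*g)^d * (2*d*g^2+1) : ℕ) := by exact_mod_cast hcount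
    _ = 2^d * (g:ℝ)^d * (2*d*(g:ℝ)^2+1) := by push_cast; ring
    _ ≤ 2^d * (g:ℝ)^d * (3*d*(g:ℝ)^2) := by
        have : (1:ℝ) ≤ (d:ℝ)*(g:ℝ)^2 := by nlinarith
        have h2 : (0:ℝ) < 2^d * (g:ℝ)^d := by positivity
        nlinarith
    _ = 3*(d:ℝ)*2^d * (g:ℝ)^(d+2) := by rw [pow_add]; ring
    _ ≤ 3*(d:ℝ)*2^d * (2*r)^(d+2) := by
        have hb := pow_le_pow_left₀ (by positivity : (0:ℝ) ≤ (g:ℝ)) hg2r (d+2)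
        have h0 : (0:ℝ) ≤ 3*(d:ℝ)*2^d := by positivity
        exact mul_le_mul_of_nonneg_left hb h0
    _ = (3*(d:ℝ)*2^(2*d+2)) * r^(d+2) := by
        rw [mul_pow]
        rw [show 2*d+2 = d + (d+2) by ring, pow_add]
        ring
    _ = (3*(d:ℝ)*2^(2*d+2)) * (s:ℝ) ^ (((d:ℝ)+2)/(d:ℝ)) := by rw [hrpow]

lemma muc_upper (d s : ℕ) (hd : 1 ≤ d) (hs : 1 ≤ s) :
    (muc (d+1) s : ℝ) ≤ (3*(d:ℝ)*2^(2*d+2)) * (s:ℝ) ^ (((d:ℝ)+2)/(d:ℝ)) := by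
  obtain ⟨V, h1, h2, h3, h4⟩ := construction d s hd hs
  have hmem : (midpts V).ncard ∈ {m | ∃ V : Set (Fin (d+1) → ℝ),
      ConvexPos V ∧ V.Finite ∧ V.ncard = s ∧ (midpts V).ncard = m} :=
    ⟨V, h1, h2, h3, rfl⟩
  calc (muc (d+1) s : ℝ) ≤ ((midpts V).ncard : ℝ) := by
        exact_mod_cast Nat.sInf_le hmem
    _ ≤ _ := h4

lemma muc_lower (d s : ℕ) (hd : 1 ≤ d) (hs : 1 ≤ s) : s - 1 ≤ muc (d+1) s := by
  obtain ⟨V0, h1, h2, h3, -⟩ := construction d s hd hs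
  have hne : {m | ∃ V : Set (Fin (d+1) → ℝ),
      ConvexPos V ∧ V.Finite ∧ V.ncard = s ∧ (midpts V).ncard = m}.Nonempty :=
    ⟨(midpts V0).ncard, V0, h1, h2, h3, rfl⟩
  obtain ⟨V, g1, g2, g3, g4⟩ := Nat.sInf_mem hne
  have : muc (d+1) s = (midpts V).ncard := g4.symm
  rw [this, ← g3]
  exact midpts_lower g1 g2

lemma muc_zero (n : ℕ) : muc n 0 = 0 := by
  apply Nat.le_zero.mp
  apply Nat.sInf_le
  refine ⟨∅, ?_, Set.finite_empty, by simp, ?_⟩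
  · intro v hv; simp at hv
  · have : midpts (∅ : Set (Fin n → ℝ)) = ∅ := by
      simp [midpts]
    rw [this]; simp

/-- For fixed `n ≥ 2` there is `C > 0` with
`μ_c(n,s) ≤ C·s^{(n+1)/(n−1)}` for all `s ≥ 1`; consequently there is
`C' > 0` with `s_{n,k} ≥ C'·k^{(n−1)/(n+1)}` for all `k ≥ 1`, where
`s_{n,k} = min {s : μ_c(n,s) ≥ k}`. -/
theorem stmt15 (n : ℕ) (hn : 2 ≤ n) :
    (∃ C : ℝ, 0 < C ∧ ∀ s : ℕ, 1 ≤ s →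
      (muc n s : ℝ) ≤ C * (s : ℝ) ^ (((n : ℝ) + 1) / ((n : ℝ) - 1))) ∧
    (∃ C' : ℝ, 0 < C' ∧ ∀ k : ℕ, 1 ≤ k →
      C' * (k : ℝ) ^ (((n : ℝ) - 1) / ((n : ℝ) + 1)) ≤
        ((sInf {s | k ≤ muc n s} : ℕ) : ℝ)) := by
  obtain ⟨d, rfl⟩ : ∃ d, n = d + 1 := ⟨n - 1, by omega⟩
  have hd : 1 ≤ d := by omega
  have hd1 : (1:ℝ) ≤ (d:ℝ) := by exact_mod_cast hd
  set C : ℝ := 3*(d:ℝ)*2^(2*d+2) with hC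
  have hCpos : 0 < C := by positivity
  have hexp : (((d:ℕ)+1 : ℝ) + 1) / (((d:ℕ)+1 : ℝ) - 1) = ((d:ℝ)+2)/(d:ℝ) := by
    push_cast; ring_nf
  have hexp' : ((((d:ℕ)+1 : ℕ) : ℝ) + 1) / ((((d:ℕ)+1 : ℕ) : ℝ) - 1) = ((d:ℝ)+2)/(d:ℝ) := by
    push_cast; ring_nf
  have part1 : ∀ s : ℕ, 1 ≤ s →
      (muc (d+1) s : ℝ) ≤ C * (s : ℝ) ^ ((((d+1 : ℕ) : ℝ) + 1) / (((d+1 : ℕ) : ℝ) - 1)) := by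
    intro s hs
    rw [hexp']
    exact muc_upper d s hd hs
  constructor
  · exact ⟨C, hCpos, part1⟩
  · -- second part
    set e : ℝ := (((d+1 : ℕ) : ℝ) + 1) / (((d+1 : ℕ) : ℝ) - 1) with he
    set e' : ℝ := (((d+1 : ℕ) : ℝ) - 1) / (((d+1 : ℕ) : ℝ) + 1) with he'
    have hdpos : (0:ℝ) < (d:ℝ) := by linarith
    have hee' : e * e' = 1 := by
      rw [he, he']
      have h1 : ((d:ℝ)+1) - 1 ≠ 0 := by push_cast; nlinarith
      have h2 : ((d:ℝ)+1) + 1 ≠ 0 := by push_cast; nlinarith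
      push_cast at h1 h2 ⊢
      field_simp
    have he'pos : 0 < e' := by
      rw [he']
      apply div_pos
      · push_cast; linarith
      · push_cast; linarith
    refine ⟨(C ^ e')⁻¹, by positivity, ?_⟩
    intro k hk
    set s₀ : ℕ := sInf {s | k ≤ muc (d+1) s} with hs₀
    have hne : {s | k ≤ muc (d+1) s}.Nonempty := by
      refine ⟨k + 1, ?_⟩
      have := muc_lower d (k+1) hd (by omega)
      simpa using this
    have hmem : s₀ ∈ {s | k ≤ muc (d+1) s} := Nat.sInf_mem hne
    have hks : k ≤ muc (d+1) s₀ := hmem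
    have hs₀1 : 1 ≤ s₀ := by
      by_contra h
      have h0 : s₀ = 0 := by omega
      rw [h0, muc_zero] at hks
      omega
    have hkC : (k:ℝ) ≤ C * (s₀:ℝ) ^ e := by
      calc (k:ℝ) ≤ (muc (d+1) s₀ : ℝ) := by exact_mod_cast hks
        _ ≤ C * (s₀:ℝ) ^ e := part1 s₀ hs₀1
    have hknn : (0:ℝ) ≤ (k:ℝ) := by positivity
    have hrhsnn : (0:ℝ) ≤ C * (s₀:ℝ) ^ e := by positivity
    have hmono := Real.rpow_le_rpow hknn hkC (le_of_lt he'pos)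
    have hsplit : (C * (s₀:ℝ) ^ e) ^ e' = C ^ e' * (s₀:ℝ) := by
      rw [Real.mul_rpow (le_of_lt hCpos) (by positivity : (0:ℝ) ≤ (s₀:ℝ) ^ e),
        ← Real.rpow_mul (by positivity : (0:ℝ) ≤ (s₀:ℝ)), hee', Real.rpow_one]
    rw [hsplit] at hmono
    have hCe : 0 < C ^ e' := Real.rpow_pos_of_pos hCpos e'
    calc (C ^ e')⁻¹ * (k:ℝ) ^ e' ≤ (C ^ e')⁻¹ * (C ^ e' * (s₀:ℝ)) := by
          exact mul_le_mul_of_nonneg_left hmono (by positivity)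
      _ = (s₀:ℝ) := by field_simp
end
end

section
/- Let n ≥ 1, let u ∈ ℝ^n, and let r > √n. Then the convex hull of B_n(u,r) ∩ ℤ^n contains the ball B_n(u, r − √n). -/
open Pointwise

noncomputable section

/-- For `r > √n`, the convex hull of the integer points of the
Euclidean ball `B_n(u,r)` contains the ball `B_n(u, r − √n)`. -/
theorem stmt16 (n : ℕ) (hn : 1 ≤ n) (u : EuclideanSpace ℝ (Fin n)) (r : ℝ)
    (hr : Real.sqrt n < r) :
    Metric.closedBall u (r - Real.sqrt n) ⊆
      convexHull ℝ (Metric.closedBall u r ∩ latE n) := by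
  
  intro x hx
  set v : Fin n → Set ℝ := fun j => {(⌊x j⌋ : ℝ), (⌊x j⌋ : ℝ) + 1} with hv
  have hmem : x ∈ convexHull ℝ ((WithLp.ofLp : EuclideanSpace ℝ (Fin n) → Fin n → ℝ) ⁻¹' (Set.pi Set.univ v)) := by
    have h0 : (WithLp.linearEquiv 2 ℝ (Fin n → ℝ)) x ∈ convexHull ℝ (Set.pi Set.univ v) := by
      apply mem_convexHull_pi
      intro j _
      have : convexHull ℝ (v j) = segment ℝ ((⌊x j⌋ : ℝ)) ((⌊x j⌋ : ℝ) + 1) := convexHull_pair _ _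
      rw [this, segment_eq_Icc (by linarith)]
      exact ⟨Int.floor_le _, (Int.lt_floor_add_one _).le⟩
    have h1 := Set.mem_image_of_mem (WithLp.linearEquiv 2 ℝ (Fin n → ℝ)).symm.toLinearMap h0
    rw [LinearMap.image_convexHull, LinearEquiv.coe_coe, LinearEquiv.image_symm_eq_preimage,
      LinearEquiv.symm_apply_apply] at h1
    exact h1
  refine convexHull_mono ?_ hmem
  intro y hy
  constructor
  · have hd : dist y x ≤ Real.sqrt n := by
      rw [EuclideanSpace.dist_eq]
      have : ∑ j, dist (y j) (x j) ^ 2 ≤ (n : ℝ) := by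
        calc ∑ j, dist (y j) (x j) ^ 2 ≤ ∑ _j : Fin n, (1:ℝ) := by
              apply Finset.sum_le_sum
              intro j _
              have h1 : dist (y j) (x j) ≤ 1 := by
                rcases hy j (Set.mem_univ j) with h | h <;>
                  rw [Real.dist_eq, h] <;>
                  [skip; push_cast] <;>
                  rw [abs_le] <;>
                  constructor <;>
                  [linarith [Int.lt_floor_add_one (x j)]; linarith [Int.floor_le (x j)];
                   linarith [Int.lt_floor_add_one (x j)]; linarith [Int.floor_le (x j)]]
              calc dist (y j) (x j) ^ 2 ≤ 1 ^ 2 := pow_le_pow_left₀ dist_nonneg h1 2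
                _ = 1 := one_pow 2
            _ = (n : ℝ) := by simp
      calc Real.sqrt (∑ j, dist (y j) (x j) ^ 2) ≤ Real.sqrt n := Real.sqrt_le_sqrt this
        _ = _ := rfl
    rw [Metric.mem_closedBall] at hx ⊢
    calc dist y u ≤ dist y x + dist x u := dist_triangle _ _ _
      _ ≤ Real.sqrt n + (r - Real.sqrt n) := add_le_add hd hx
      _ = r := by ring
  · simp only [latE, Set.mem_setOf_eq]
    intro j
    rcases hy j (Set.mem_univ j) with h | h
    · exact ⟨⌊x j⌋, h⟩
    · exact ⟨⌊x j⌋ + 1, by push_cast; exact h⟩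
end
end

section
/- For every n ≥ 1, the set U of vectors u ∈ ℝ^n with the property that for every r > 0 the boundary of the ball B_n(r·u, r) contains at most one integer point (i.e., |{x ∈ ℤ^n : ‖x − r·u‖ = r}| ≤ 1 for all r > 0) is dense in ℝ^n. -/
open Pointwise
open scoped RealInnerProductSpace

noncomputable section

private def Qf {n : ℕ} (X Y u : EuclideanSpace ℝ (Fin n)) : ℝ :=
  (‖u‖^2 - 1) * (‖X‖^2 - ‖Y‖^2)^2
    - 4 * ⟪X, u⟫ * (‖X‖^2 - ‖Y‖^2) * ⟪X - Y, u⟫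
    + 4 * ‖X‖^2 * ⟪X - Y, u⟫^2

private lemma sphere_quad {n : ℕ} (X u : EuclideanSpace ℝ (Fin n)) {r : ℝ} (hX : dist X (r • u) = r) :
    ‖X‖^2 - 2*(r*⟪X,u⟫) + r^2*‖u‖^2 = r^2 := by
  have h1 : ‖X - r•u‖^2 = r^2 := by rw [dist_eq_norm] at hX; rw [hX]
  rw [norm_sub_sq_real, real_inner_smul_right, norm_smul, mul_pow, Real.norm_eq_abs, sq_abs] at h1
  linarith [h1]

private lemma Qf_eq_zero {n : ℕ} {X Y u : EuclideanSpace ℝ (Fin n)} {r : ℝ} (hr : 0 < r)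
    (hX : dist X (r • u) = r) (hY : dist Y (r • u) = r) : Qf X Y u = 0 := by
  have h1 := sphere_quad X u hX
  have h2 := sphere_quad Y u hY
  have hi : ⟪X - Y, u⟫ = ⟪X,u⟫ - ⟪Y,u⟫ := inner_sub_left X Y u
  unfold Qf
  rw [hi]
  set b := ⟪X,u⟫; set c := ⟪Y,u⟫; set A := ‖u‖^2
  set p := ‖X‖^2; set q := ‖Y‖^2
  -- from h1 - h2 : p - q = 2r(b-c);  (A-1)r^2 - 2br + p = 0
  have h3 : p - q = 2*r*(b-c) := by linarith
  have h4 : (A-1)*r^2 - 2*b*r + p = 0 := by linarith [h1]; 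
  rw [h3]
  linear_combination (4*(b-c)^2) * h4

private lemma Qf_cont {n : ℕ} (X Y : EuclideanSpace ℝ (Fin n)) : Continuous (fun u => Qf X Y u) := by
  have hXu : Continuous fun u : EuclideanSpace ℝ (Fin n) => (⟪X, u⟫ : ℝ) :=
    continuous_const.inner continuous_id
  have hDu : Continuous fun u : EuclideanSpace ℝ (Fin n) => (⟪X - Y, u⟫ : ℝ) :=
    continuous_const.inner continuous_id
  unfold Qf
  exact (((continuous_norm.pow 2).sub continuous_const).mul continuous_const).sub
    ((((continuous_const.mul hXu)).mul continuous_const).mul hDu) |>.add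
    (continuous_const.mul (hDu.pow 2))

private lemma Qf_dense {n : ℕ} {X Y : EuclideanSpace ℝ (Fin n)} (hXY : X ≠ Y) :
    Dense {u : EuclideanSpace ℝ (Fin n) | Qf X Y u ≠ 0} := by
  rw [Metric.dense_iff]
  intro u ε hε
  have hd0 : X - Y ≠ 0 := sub_ne_zero.mpr hXY
  have hnd : 0 < ‖X - Y‖ := norm_pos_iff.mpr hd0
  by_cases h0 : Qf X Y u ≠ 0
  · exact ⟨u, Metric.mem_ball_self hε, h0⟩
  push_neg at h0
  set δ := ε/(2*‖X-Y‖) with hδdef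
  have hδ : 0 < δ := by positivity
  have key : ∀ t : ℝ, Qf X Y (u + t • (X-Y)) =
      (‖X-Y‖^2*(‖X‖^2-‖Y‖^2)^2 - 4*⟪X,X-Y⟫*(‖X‖^2-‖Y‖^2)*‖X-Y‖^2
        + 4*‖X‖^2*(‖X-Y‖^2)^2)*t^2
      + (2*⟪X-Y,u⟫*(‖X‖^2-‖Y‖^2)^2
         - 4*(⟪X,X-Y⟫*(‖X‖^2-‖Y‖^2)*⟪X-Y,u⟫ + ⟪X,u⟫*(‖X‖^2-‖Y‖^2)*‖X-Y‖^2)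
         + 8*‖X‖^2*⟪X-Y,u⟫*‖X-Y‖^2)*t
      + Qf X Y u := by
    intro t
    unfold Qf
    rw [norm_add_sq_real, inner_add_right, inner_add_right, real_inner_smul_right,
      real_inner_smul_right, real_inner_smul_right, norm_smul, mul_pow,
      Real.norm_eq_abs, sq_abs, real_inner_self_eq_norm_sq, real_inner_comm u (X-Y)]
    ring
  -- coefficient facts
  have hsd : (‖X‖^2-‖Y‖^2) - 2*⟪X,X-Y⟫ = -‖X-Y‖^2 := by
    have h1 : ⟪X,X-Y⟫ = ‖X‖^2 - ⟪X,Y⟫ := by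
      rw [inner_sub_right, real_inner_self_eq_norm_sq]
    have h2 : ‖X-Y‖^2 = ‖X‖^2 - 2*⟪X,Y⟫ + ‖Y‖^2 := norm_sub_sq_real X Y
    linarith
  have hCS : ⟪X,X-Y⟫^2 ≤ ‖X‖^2*‖X-Y‖^2 := by
    have h := abs_real_inner_le_norm X (X-Y)
    nlinarith [sq_abs (⟪X,X-Y⟫), norm_nonneg X, norm_nonneg (X-Y), abs_nonneg (⟪X,X-Y⟫)]
  have h2e : ‖X‖^2-‖Y‖^2+‖X-Y‖^2 = 2*⟪X,X-Y⟫ := by linarith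
  have hCS' : (‖X‖^2-‖Y‖^2+‖X-Y‖^2)^2 ≤ 4*(‖X‖^2*‖X-Y‖^2) := by
    rw [h2e]; nlinarith [hCS]
  have hEe : ⟪X,X-Y⟫ = (‖X‖^2-‖Y‖^2+‖X-Y‖^2)/2 := by linarith
  have hC2eq : ‖X-Y‖^2*(‖X‖^2-‖Y‖^2)^2 - 4*⟪X,X-Y⟫*(‖X‖^2-‖Y‖^2)*‖X-Y‖^2
        + 4*‖X‖^2*(‖X-Y‖^2)^2
      = ‖X-Y‖^2 * ((‖X-Y‖^2)^2 + 4*(‖X‖^2*‖X-Y‖^2)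
          - (‖X‖^2-‖Y‖^2+‖X-Y‖^2)^2) := by
    linear_combination (-4*(‖X‖^2-‖Y‖^2)*‖X-Y‖^2) * hEe
  have hD2 : 0 < ‖X-Y‖^2 := by positivity
  have hC2pos : 0 < ‖X-Y‖^2*(‖X‖^2-‖Y‖^2)^2 - 4*⟪X,X-Y⟫*(‖X‖^2-‖Y‖^2)*‖X-Y‖^2
        + 4*‖X‖^2*(‖X-Y‖^2)^2 := by
    rw [hC2eq]
    apply mul_pos hD2
    nlinarith [hCS', pow_pos hD2 2]
  have hne : Qf X Y (u + δ•(X-Y)) ≠ 0 ∨ Qf X Y (u + (δ/2)•(X-Y)) ≠ 0 := by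
    by_contra hc
    push_neg at hc
    obtain ⟨h1, h2⟩ := hc
    rw [key δ, h0] at h1
    rw [key (δ/2), h0] at h2
    have hc20 : (‖X-Y‖^2*(‖X‖^2-‖Y‖^2)^2 - 4*⟪X,X-Y⟫*(‖X‖^2-‖Y‖^2)*‖X-Y‖^2
        + 4*‖X‖^2*(‖X-Y‖^2)^2) * δ^2 = 0 := by linear_combination 2*h1 - 4*h2
    have := mul_pos hC2pos (pow_pos hδ 2)
    linarith
  have hball : ∀ t : ℝ, 0 < t → t ≤ δ → u + t•(X-Y) ∈ Metric.ball u ε := by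
    intro t ht1 ht2
    rw [Metric.mem_ball, dist_eq_norm, add_sub_cancel_left, norm_smul,
      Real.norm_eq_abs, abs_of_pos ht1]
    have : δ * ‖X-Y‖ = ε/2 := by rw [hδdef]; field_simp
    nlinarith [hnd]
  rcases hne with h | h
  · exact ⟨u + δ•(X-Y), hball δ hδ le_rfl, h⟩
  · exact ⟨u + (δ/2)•(X-Y), hball (δ/2) (by linarith) (by linarith), h⟩

/-- The set of `u ∈ ℝ^n` such that for every `r > 0` the
boundary of the ball `B_n(r·u, r)` contains at most one integer point is
dense in `ℝ^n`. -/
theorem stmt17 (n : ℕ) (hn : 1 ≤ n) :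
    Dense {u : EuclideanSpace ℝ (Fin n) |
      ∀ r : ℝ, 0 < r →
        Set.Subsingleton {x ∈ latE n | dist x (r • u) = r}} := by
  classical
  set toE : (Fin n → ℤ) → EuclideanSpace ℝ (Fin n) := fun z => WithLp.toLp 2 (fun j => (z j : ℝ)) with htoE
  set S : {p : (Fin n → ℤ) × (Fin n → ℤ) // p.1 ≠ p.2} → Set (EuclideanSpace ℝ (Fin n)) :=
    fun p => {u | Qf (toE p.1.1) (toE p.1.2) u ≠ 0} with hS
  have hopen : ∀ p, IsOpen (S p) := fun p =>
    isOpen_compl_iff.2 (isClosed_eq (Qf_cont _ _) continuous_const)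
  have hdense : ∀ p, Dense (S p) := by
    intro p
    apply Qf_dense
    intro h
    apply p.2
    funext j
    have := congrArg (fun v : EuclideanSpace ℝ (Fin n) => v j) h
    simp [htoE] at this
    exact_mod_cast this
  have hD := dense_iInter_of_isOpen hopen hdense
  apply hD.mono
  intro u hu r hr x hx y hy
  obtain ⟨hxlat, hxd⟩ := hx
  obtain ⟨hylat, hyd⟩ := hy
  choose zx hzx using hxlat
  choose zy hzy using hylat
  have hx' : x = toE zx := by ext j; exact hzx j
  have hy' : y = toE zy := by ext j; exact hzy j
  by_contra hne
  have hzz : zx ≠ zy := by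
    intro h; exact hne (by rw [hx', hy', h])
  have hu' := Set.mem_iInter.mp hu ⟨(zx, zy), hzz⟩
  exact hu' (Qf_eq_zero hr (hx' ▸ hxd) (hy' ▸ hyd))
end
end

section
/- Let V ⊆ ℝ² be a finite set. If all the points of V are collinear, then |M(V)| ≥ |V| − 1. If the points of V are not all collinear, then |M(V)| ≥ 2|V| − 3. -/
open Pointwise

noncomputable section

abbrev Pt := Fin 2 → ℝ

lemma exists_injOn_aux (A : Finset Pt) :
    ∃ f : Pt → ℝ, (∀ x y : Pt, f (x + y) = f x + f y) ∧ Set.InjOn f (A : Set Pt) := by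
  classical
  set bad : Finset ℝ := (A ×ˢ A).image (fun p => -(p.1 0 - p.2 0) / (p.1 1 - p.2 1)) with hbad
  obtain ⟨t, ht⟩ := Infinite.exists_notMem_finset bad
  refine ⟨fun x => x 0 + t * x 1, ?_, ?_⟩
  · intro x y; simp only [Pi.add_apply]; ring
  · intro x hx y hy hxy
    by_contra hne
    simp only [Finset.mem_coe] at hx hy
    have h1 : x 0 + t * x 1 = y 0 + t * y 1 := hxy
    by_cases h2 : x 1 = y 1
    · have h0 : x 0 = y 0 := by rw [h2] at h1; linarith
      apply hne
      funext j
      fin_cases j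
      · exact h0
      · exact h2
    · apply ht
      have hteq : t = -(x 0 - y 0) / (x 1 - y 1) := by
        rw [eq_div_iff (sub_ne_zero.2 h2)]
        linarith
      rw [hteq, hbad]
      exact Finset.mem_image.2 ⟨(x, y), Finset.mem_product.2 ⟨hx, hy⟩, rfl⟩

lemma collinear_of_card_le_two (A : Finset Pt) (h : A.card ≤ 2) :
    Collinear ℝ (A : Set Pt) := by
  classical
  by_cases h0 : A.card = 0
  · rw [Finset.card_eq_zero.1 h0]
    simpa using collinear_empty ℝ Pt
  by_cases h1 : A.card = 1
  · obtain ⟨a, rfl⟩ := Finset.card_eq_one.1 h1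
    simpa using collinear_singleton ℝ a
  · have h2' : A.card = 2 := by omega
    obtain ⟨a, b, hab, rfl⟩ := Finset.card_eq_two.1 h2'
    simp only [Finset.coe_insert, Finset.coe_singleton]
    exact collinear_pair ℝ a b

lemma sumset_lb_one : ∀ (A : Finset Pt), A.Nonempty → 2 * A.card - 1 ≤ (A + A).card := by
  classical
  intro A
  induction A using Finset.strongInduction with
  | _ A ih =>
  intro hA
  obtain ⟨f, hfadd, hfinj⟩ := exists_injOn_aux A
  obtain ⟨a1, ha1, hmax⟩ := A.exists_max_image f hA
  set A' := A.erase a1 with hA'def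
  rcases A'.eq_empty_or_nonempty with he | hne
  · have hAs : A = {a1} := by
      apply Finset.eq_singleton_iff_unique_mem.2
      refine ⟨ha1, fun x hx => ?_⟩
      by_contra hxne
      have : x ∈ A' := Finset.mem_erase.2 ⟨hxne, hx⟩
      simp [he] at this
    subst hAs
    simp
  · obtain ⟨a2, ha2, hmax2⟩ := A'.exists_max_image f hne
    have ha2A : a2 ∈ A := Finset.mem_of_mem_erase ha2
    have ha2ne : a2 ≠ a1 := Finset.ne_of_mem_erase ha2
    have hf21 : f a2 < f a1 :=
      lt_of_le_of_ne (hmax _ ha2A) (fun h => ha2ne (hfinj ha2A ha1 h))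
    have hbound : ∀ z ∈ A' + A', f z ≤ f a2 + f a2 := by
      intro z hz
      obtain ⟨b, hb, c, hc, rfl⟩ := Finset.mem_add.1 hz
      rw [hfadd]
      exact add_le_add (hmax2 _ hb) (hmax2 _ hc)
    have h1 : a1 + a1 ∉ A' + A' := fun h => by
      have := hbound _ h; rw [hfadd] at this; linarith
    have h2 : a1 + a2 ∉ A' + A' := fun h => by
      have := hbound _ h; rw [hfadd] at this; linarith
    have h12 : a1 + a1 ≠ a1 + a2 := fun h => ha2ne (add_left_cancel h).symm
    have hsub : insert (a1 + a1) (insert (a1 + a2) (A' + A')) ⊆ A + A := by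
      intro z hz
      simp only [Finset.mem_insert] at hz
      rcases hz with rfl | rfl | hz
      · exact Finset.add_mem_add ha1 ha1
      · exact Finset.add_mem_add ha1 ha2A
      · exact Finset.add_subset_add (Finset.erase_subset _ _) (Finset.erase_subset _ _) hz
    have hcard := Finset.card_le_card hsub
    rw [Finset.card_insert_of_notMem (by simp [h12, h1]),
      Finset.card_insert_of_notMem h2] at hcard
    have hih := ih A' (Finset.erase_ssubset ha1) hne
    have hAc : A'.card = A.card - 1 := Finset.card_erase_of_mem ha1
    have hA1 : 1 ≤ A.card := Finset.card_pos.2 hA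
    omega

lemma sumset_lb_two : ∀ (A : Finset Pt), ¬ Collinear ℝ (A : Set Pt) →
    3 * A.card - 3 ≤ (A + A).card := by
  classical
  intro A
  induction A using Finset.strongInduction with
  | _ A ih =>
  intro hA
  have hcard3 : 3 ≤ A.card := by
    by_contra h
    exact hA (collinear_of_card_le_two A (by omega))
  have hAne : A.Nonempty := Finset.card_pos.1 (by omega)
  obtain ⟨f, hfadd, hfinj⟩ := exists_injOn_aux A
  obtain ⟨a1, ha1, hmax⟩ := A.exists_max_image f hAne
  set A' := A.erase a1 with hA'def
  have hA'card : A'.card = A.card - 1 := Finset.card_erase_of_mem ha1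
  have hne : A'.Nonempty := Finset.card_pos.1 (by omega)
  have hcoeA : (A : Set Pt) = insert a1 (A' : Set Pt) := by
    rw [hA'def, Finset.coe_erase, Set.insert_diff_singleton,
      Set.insert_eq_self.2 (Finset.mem_coe.2 ha1)]
  have hsub' : A' + A' ⊆ A + A :=
    Finset.add_subset_add (Finset.erase_subset _ _) (Finset.erase_subset _ _)
  have hstrict : ∀ x ∈ A, x ≠ a1 → f x < f a1 := fun x hx hxne =>
    lt_of_le_of_ne (hmax x hx) (fun h => hxne (hfinj hx ha1 h))
  by_cases hcol : Collinear ℝ (A' : Set Pt)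
  · -- A' collinear : use {a1} + A disjoint from A' + A'
    have hnotmem : a1 ∉ affineSpan ℝ (A' : Set Pt) := by
      intro hmem
      apply hA
      rw [hcoeA]
      exact (collinear_insert_iff_of_mem_affineSpan hmem).2 hcol
    have hD : ({a1} + A : Finset Pt).card = A.card := by
      rw [Finset.singleton_add]
      exact Finset.card_image_of_injective _ (add_right_injective a1)
    have hdisj : Disjoint ({a1} + A) (A' + A') := by
      rw [Finset.disjoint_left]
      rintro z hz hz'
      obtain ⟨b, hb, c, hc, hbc⟩ := Finset.mem_add.1 hz'
      obtain ⟨u, hu, x, hx, hxz⟩ := Finset.mem_add.1 hz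
      rw [Finset.mem_singleton] at hu
      rw [hu] at hxz
      -- a1 + x = b + c
      have hbceq : b + c = a1 + x := by rw [hbc, ← hxz]
      have hbs : b ∈ affineSpan ℝ (A' : Set Pt) := subset_affineSpan ℝ _ (Finset.mem_coe.2 hb)
      have hcs : c ∈ affineSpan ℝ (A' : Set Pt) := subset_affineSpan ℝ _ (Finset.mem_coe.2 hc)
      apply hnotmem
      by_cases hxa : x = a1
      · -- a1 + a1 = b + c : a1 is the midpoint of b and c
        rw [hxa] at hbceq
        have hmid : a1 = (2⁻¹ : ℝ) • (c -ᵥ b) +ᵥ b := by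
          funext j
          have hj := congrFun hbceq j
          simp only [Pi.add_apply, Pi.vadd_apply, Pi.smul_apply, vsub_eq_sub, vadd_eq_add,
            Pi.sub_apply, smul_eq_mul] at hj ⊢
          linarith
        rw [hmid]
        exact (affineSpan ℝ (A' : Set Pt)).smul_vsub_vadd_mem _ hcs hbs hbs
      · have hxA' : x ∈ A' := Finset.mem_erase.2 ⟨hxa, hx⟩
        have hxs : x ∈ affineSpan ℝ (A' : Set Pt) := subset_affineSpan ℝ _ (Finset.mem_coe.2 hxA')
        have heq : a1 = (1 : ℝ) • (b -ᵥ x) +ᵥ c := by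
          funext j
          have hj := congrFun hbceq j
          simp only [Pi.add_apply, Pi.vadd_apply, Pi.smul_apply, vsub_eq_sub, vadd_eq_add,
            Pi.sub_apply, smul_eq_mul, one_mul] at hj ⊢
          linarith
        rw [heq]
        exact (affineSpan ℝ (A' : Set Pt)).smul_vsub_vadd_mem _ hbs hxs hcs
    have hsubU : ({a1} + A) ∪ (A' + A') ⊆ A + A := by
      refine Finset.union_subset ?_ hsub'
      refine Finset.add_subset_add ?_ le_rfl
      simpa using ha1
    have hcardU := Finset.card_le_card hsubU
    rw [Finset.card_union_of_disjoint hdisj, hD] at hcardU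
    have haux := sumset_lb_one A' hne
    omega
  · -- A' not collinear
    obtain ⟨a2, ha2, hmax2⟩ := A'.exists_max_image f hne
    have ha2A : a2 ∈ A := Finset.mem_of_mem_erase ha2
    have ha2ne : a2 ≠ a1 := Finset.ne_of_mem_erase ha2
    have hf21 : f a2 < f a1 := hstrict a2 ha2A ha2ne
    set L := affineSpan ℝ ({a1, a2} : Set Pt) with hLdef
    have ha1L : a1 ∈ L := subset_affineSpan ℝ _ (Set.mem_insert _ _)
    have ha2L : a2 ∈ L := subset_affineSpan ℝ _ (Set.mem_insert_of_mem _ rfl)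
    have hSne : ∃ x ∈ A, x ∉ L := by
      by_contra h
      push_neg at h
      apply hA
      rw [collinear_iff_of_mem (Finset.mem_coe.2 ha1)]
      refine ⟨a2 -ᵥ a1, fun p hp => ?_⟩
      have hpL : (p -ᵥ a1) +ᵥ a1 ∈ L := by rw [vsub_vadd]; exact h p (Finset.mem_coe.1 hp)
      obtain ⟨r, hr⟩ := vadd_left_mem_affineSpan_pair.1 hpL
      exact ⟨r, by rw [hr, vsub_vadd]⟩
    set S := A.filter (fun x => x ∉ L) with hSdef
    have hSne' : S.Nonempty := by
      obtain ⟨x, hx1, hx2⟩ := hSne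
      exact ⟨x, Finset.mem_filter.2 ⟨hx1, hx2⟩⟩
    obtain ⟨am, ham, hmaxm⟩ := S.exists_max_image f hSne'
    obtain ⟨hamA, hamL⟩ := Finset.mem_filter.1 ham
    have hkey : ∀ x ∈ A, f am < f x → x ∈ L := by
      intro x hx hfx
      by_contra hxL
      exact absurd (hmaxm x (Finset.mem_filter.2 ⟨hx, hxL⟩)) (not_le.2 hfx)
    have hamne1 : am ≠ a1 := fun h => hamL (h ▸ ha1L)
    have hamne2 : am ≠ a2 := fun h => hamL (h ▸ ha2L)
    have hfm1 : f am < f a1 := hstrict am hamA hamne1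
    have hbound : ∀ z ∈ A' + A', f z ≤ f a2 + f a2 := by
      intro z hz
      obtain ⟨b, hb, c, hc, rfl⟩ := Finset.mem_add.1 hz
      rw [hfadd]
      exact add_le_add (hmax2 _ hb) (hmax2 _ hc)
    have h1 : a1 + a1 ∉ A' + A' := fun h => by
      have := hbound _ h; rw [hfadd] at this; linarith
    have h2 : a1 + a2 ∉ A' + A' := fun h => by
      have := hbound _ h; rw [hfadd] at this; linarith
    have h3 : a1 + am ∉ A' + A' := by
      intro h
      obtain ⟨b, hb, c, hc, hbc⟩ := Finset.mem_add.1 h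
      have hbA : b ∈ A := Finset.mem_of_mem_erase hb
      have hcA : c ∈ A := Finset.mem_of_mem_erase hc
      have hfb : f b < f a1 := hstrict b hbA (Finset.ne_of_mem_erase hb)
      have hfc : f c < f a1 := hstrict c hcA (Finset.ne_of_mem_erase hc)
      have hsum : f b + f c = f a1 + f am := by rw [← hfadd, ← hfadd, hbc]
      have hbL : b ∈ L := hkey b hbA (by linarith)
      have hcL : c ∈ L := hkey c hcA (by linarith)
      apply hamL
      have heq : am = (1 : ℝ) • (b -ᵥ a1) +ᵥ c := by
        funext j
        have hj := congrFun hbc j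
        simp only [Pi.add_apply, Pi.vadd_apply, Pi.smul_apply, vsub_eq_sub, vadd_eq_add,
          Pi.sub_apply, smul_eq_mul, one_mul] at hj ⊢
        linarith
      rw [heq]
      exact L.smul_vsub_vadd_mem _ hbL ha1L hcL
    have h12 : a1 + a1 ≠ a1 + a2 := fun h => ha2ne (add_left_cancel h).symm
    have h13 : a1 + a1 ≠ a1 + am := fun h => hamne1 (add_left_cancel h).symm
    have h23 : a1 + a2 ≠ a1 + am := fun h => hamne2 ((add_left_cancel h).symm ▸ rfl)
    have hsub : insert (a1 + a1) (insert (a1 + a2) (insert (a1 + am) (A' + A'))) ⊆ A + A := by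
      intro z hz
      simp only [Finset.mem_insert] at hz
      rcases hz with rfl | rfl | rfl | hz
      · exact Finset.add_mem_add ha1 ha1
      · exact Finset.add_mem_add ha1 ha2A
      · exact Finset.add_mem_add ha1 hamA
      · exact hsub' hz
    have hcard := Finset.card_le_card hsub
    rw [Finset.card_insert_of_notMem (by simp [h12, h13, h1]),
      Finset.card_insert_of_notMem (by simp [h23, h2]),
      Finset.card_insert_of_notMem h3] at hcard
    have hih := ih A' (Finset.erase_ssubset ha1) hcol
    have hc3' : 3 ≤ A'.card := by
      by_contra h
      exact hcol (collinear_of_card_le_two A' (by omega))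
    omega

/-- For a finite `V ⊆ ℝ²`: if `V` is collinear then
`|M(V)| ≥ |V| − 1`; if `V` is not collinear then `|M(V)| ≥ 2|V| − 3`. -/
theorem stmt18 (V : Set (Fin 2 → ℝ)) (hV : V.Finite) :
    (Collinear ℝ V → V.ncard - 1 ≤ (midpts V).ncard) ∧
    (¬ Collinear ℝ V → 2 * V.ncard - 3 ≤ (midpts V).ncard) := by
  classical
  set A := hV.toFinset with hAdef
  have hVA : (A : Set Pt) = V := hV.coe_toFinset
  have hmid : midpts V = ((fun z => (1/2 : ℝ) • z) '' (V + V)) \ V := by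
    unfold midpts
    congr 1
    ext p
    simp only [Set.mem_image, Set.mem_setOf_eq, Set.mem_add]
    constructor
    · rintro ⟨x, hx, y, hy, rfl⟩
      exact ⟨x + y, ⟨x, hx, y, hy, rfl⟩, rfl⟩
    · rintro ⟨z, ⟨x, hx, y, hy, rfl⟩, rfl⟩
      exact ⟨x, hx, y, hy, rfl⟩
  have hWfin : (V + V).Finite := hV.add hV
  have hVV : V + V = ↑(A + A) := by rw [Finset.coe_add, hVA]
  have hinj : Function.Injective (fun z : Pt => (1/2 : ℝ) • z) :=
    smul_right_injective Pt (by norm_num)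
  have hHcard : ((fun z => (1/2 : ℝ) • z) '' (V + V)).ncard = (A + A).card := by
    rw [Set.ncard_image_of_injective _ hinj, hVV, Set.ncard_coe_finset]
  have hsubV : V ⊆ (fun z => (1/2 : ℝ) • z) '' (V + V) := by
    intro v hv
    refine ⟨v + v, Set.add_mem_add hv hv, ?_⟩
    funext j
    simp only [Pi.smul_apply, Pi.add_apply, smul_eq_mul]
    ring
  have hHfin : ((fun z => (1/2 : ℝ) • z) '' (V + V)).Finite := hWfin.image _
  have hcardmid : (midpts V).ncard = (A + A).card - A.card := by
    rw [hmid, Set.ncard_diff hsubV hV, hHcard, ← hVA, Set.ncard_coe_finset]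
  have hcardV : V.ncard = A.card := by rw [← hVA, Set.ncard_coe_finset]
  have hle : A.card ≤ (A + A).card := by
    have h := Set.ncard_le_ncard hsubV hHfin
    rwa [hHcard, ← hVA, Set.ncard_coe_finset] at h
  constructor
  · intro _
    rcases A.eq_empty_or_nonempty with he | hne
    · rw [hcardV, he]
      simp
    · have := sumset_lb_one A hne
      omega
  · intro h
    have hnc : ¬ Collinear ℝ (A : Set Pt) := by rwa [hVA]
    have h2 := sumset_lb_two A hnc
    have h3 : 3 ≤ A.card := by
      by_contra hh
      exact hnc (collinear_of_card_le_two A (by omega))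
    omega
end
end
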